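/- arXiv:2502.18958 — 7 statements merged into one kernel-verified Lean document; each statement's English description precedes it below -/
import Mathlib

section
/- For real numbers $a, b$ with $0 \le a < 1$ and $0 \le b < 1$, and any integer $i \ge 1$, one has $(1-a^i b^i)^2 (1-a^2)(1-b^2) \le (1-ab)^2 (1-a^{2i})(1-b^{2i})$. -/
theorem stmt_0 (a b : ℝ) (ha0 : 0 ≤ a) (ha1 : a < 1) (hb0 : 0 ≤ b) (hb1 : b < 1)
    (i : ℕ) (hi : 1 ≤ i) :
    (1 - a ^ i * b ^ i) ^ 2 * (1 - a ^ 2) * (1 - b ^ 2) ≤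
      (1 - a * b) ^ 2 * (1 - a ^ (2 * i)) * (1 - b ^ (2 * i)) := by
  have key : ∀ x : ℝ, (1 - x) * ∑ k ∈ Finset.range i, x ^ k = 1 - x ^ i := by
    intro x
    have := geom_sum_mul x i
    linarith [this, mul_comm (∑ k ∈ Finset.range i, x ^ k) (x - 1)]
  set S := ∑ k ∈ Finset.range i, (a * b) ^ k with hS
  set A := ∑ k ∈ Finset.range i, (a ^ 2) ^ k with hA
  set B := ∑ k ∈ Finset.range i, (b ^ 2) ^ k with hB
  have h1 : 1 - a ^ i * b ^ i = (1 - a * b) * S := by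
    rw [key (a * b), mul_pow]
  have h2 : 1 - a ^ (2 * i) = (1 - a ^ 2) * A := by
    rw [key (a ^ 2), ← pow_mul]
  have h3 : 1 - b ^ (2 * i) = (1 - b ^ 2) * B := by
    rw [key (b ^ 2), ← pow_mul]
  have hcs : S ^ 2 ≤ A * B := by
    have h := Finset.sum_mul_sq_le_sq_mul_sq (Finset.range i)
      (fun k => a ^ k) (fun k => b ^ k)
    simpa [hS, hA, hB, mul_pow, pow_right_comm] using h
  have ha2 : (0:ℝ) ≤ 1 - a ^ 2 := by nlinarith
  have hb2 : (0:ℝ) ≤ 1 - b ^ 2 := by nlinarith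
  have hab : (0:ℝ) ≤ (1 - a * b) ^ 2 := sq_nonneg _
  rw [h1, h2, h3]
  calc ((1 - a * b) * S) ^ 2 * (1 - a ^ 2) * (1 - b ^ 2)
      = (1 - a * b) ^ 2 * (S ^ 2) * ((1 - a ^ 2) * (1 - b ^ 2)) := by ring
    _ ≤ (1 - a * b) ^ 2 * (A * B) * ((1 - a ^ 2) * (1 - b ^ 2)) := by
        apply mul_le_mul_of_nonneg_right
        · exact mul_le_mul_of_nonneg_left hcs hab
        · positivity
    _ = (1 - a * b) ^ 2 * ((1 - a ^ 2) * A) * ((1 - b ^ 2) * B) := by ring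
end

section
/- For a real number $a$ with $0 \le a < 1$, the double series $\sum_{m \ge 0} \sum_{k \ge 1} \frac{(1-a^k) a^m}{(m+k)(m+k+1)}$ converges and its sum equals $1$. -/
open Finset Filter

private lemma tendsto_aux (m : ℕ) :
    Tendsto (fun n : ℕ => ((m : ℝ) + n + 1)⁻¹) atTop (nhds 0) := by
  apply Filter.Tendsto.comp tendsto_inv_atTop_zero
  apply tendsto_atTop_add_const_right
  apply tendsto_atTop_add_const_left
  exact tendsto_natCast_atTop_atTop

private lemma tele (m : ℕ) :
    HasSum (fun n : ℕ => 1 / (((m : ℝ) + n + 1) * ((m : ℝ) + n + 2))) (((m : ℝ) + 1)⁻¹) := by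
  set d : ℕ → ℝ := fun n => ((m : ℝ) + n + 1)⁻¹ with hd
  have hpos : ∀ n : ℕ, (0:ℝ) < ((m : ℝ) + n + 1) := by
    intro n; positivity
  have key : ∀ n : ℕ, 1 / (((m : ℝ) + n + 1) * ((m : ℝ) + n + 2)) = d n - d (n + 1) := by
    intro n
    have h1 := hpos n
    have h2 := hpos (n+1)
    simp only [hd]
    rw [inv_sub_inv (by positivity) (by positivity)]
    congr 1
    · push_cast; ring
    · push_cast; ring
  have hnn : ∀ n : ℕ, (0:ℝ) ≤ 1 / (((m : ℝ) + n + 1) * ((m : ℝ) + n + 2)) := by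
    intro n; positivity
  rw [hasSum_iff_tendsto_nat_of_nonneg hnn]
  have : (fun N : ℕ => ∑ i ∈ range N, 1 / (((m : ℝ) + i + 1) * ((m : ℝ) + i + 2)))
      = fun N : ℕ => d 0 - d N := by
    funext N
    rw [show (∑ i ∈ range N, 1 / (((m : ℝ) + i + 1) * ((m : ℝ) + i + 2)))
        = ∑ i ∈ range N, (d i - d (i+1)) from Finset.sum_congr rfl fun i _ => key i]
    exact Finset.sum_range_sub' d N
  rw [this]
  have h0 : d 0 = ((m : ℝ) + 1)⁻¹ := by simp [hd]
  have := Tendsto.const_sub (d 0) (tendsto_aux m)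
  simpa [h0] using this

theorem stmt_1 (a : ℝ) (ha0 : 0 ≤ a) (ha1 : a < 1) :
    HasSum (fun p : ℕ × ℕ =>
      ((1 - a ^ (p.2 + 1)) * a ^ p.1) /
        ((p.1 + (p.2 + 1) : ℝ) * (p.1 + (p.2 + 1) + 1))) 1 := by
  set D : ℕ × ℕ → ℝ := fun p => ((p.1 : ℝ) + p.2 + 1) * ((p.1 : ℝ) + p.2 + 2) with hD
  have hDpos : ∀ p : ℕ × ℕ, 0 < D p := by intro p; simp only [hD]; positivity
  set f1 : ℕ × ℕ → ℝ := fun p => a ^ p.1 / D p with hf1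
  set f2 : ℕ × ℕ → ℝ := fun p => a ^ (p.1 + p.2 + 1) / D p with hf2
  set g : ℕ → ℝ := fun m => a ^ m / ((m : ℝ) + 1) with hg
  -- fiberwise sums of f1
  have fib1 : ∀ m : ℕ, HasSum (fun n => f1 (m, n)) (g m) := by
    intro m
    have h := (tele m).mul_left (a ^ m)
    simp only [mul_one_div, ← div_eq_mul_inv] at h
    exact h
  -- summability of g
  have hg_nonneg : ∀ m : ℕ, 0 ≤ g m := by intro m; simp only [hg]; positivity
  have hg_summ : Summable g := by
    apply Summable.of_nonneg_of_le hg_nonneg (fun m => ?_)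
      (summable_geometric_of_lt_one ha0 ha1)
    simp only [hg]
    rw [div_le_iff₀ (by positivity)]
    nlinarith [pow_nonneg ha0 m]
  set S : ℝ := ∑' m, g m with hS
  have hgS : HasSum g S := hg_summ.hasSum
  -- f1 summable and has sum S
  have hf1_nonneg : ∀ p : ℕ × ℕ, 0 ≤ f1 p := by
    intro p; have := hDpos p; simp only [hf1]; positivity
  have hf1_summ : Summable f1 := by
    rw [summable_prod_of_nonneg hf1_nonneg]
    refine ⟨fun m => (fib1 m).summable, ?_⟩
    have : (fun m => ∑' n, f1 (m, n)) = g := by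
      funext m; exact (fib1 m).tsum_eq
    rw [this]; exact hg_summ
  have hf1S : HasSum f1 S := by
    have h := hf1_summ.hasSum
    have : HasSum g (∑' p, f1 p) := h.prod_fiberwise fib1
    rwa [this.unique hgS] at h
  -- f2 via sigma antidiagonal
  have fib2sum : ∀ n : ℕ, HasSum (fun x : Finset.HasAntidiagonal.antidiagonal n =>
      f2 (Finset.HasAntidiagonal.sigmaAntidiagonalEquivProd ⟨n, x⟩)) (g (n + 1)) := by
    intro n
    have hconst : ∀ x : Finset.HasAntidiagonal.antidiagonal n,
        f2 (Finset.HasAntidiagonal.sigmaAntidiagonalEquivProd ⟨n, x⟩)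
          = a ^ (n + 1) / (((n : ℝ) + 1) * ((n : ℝ) + 2)) := by
      rintro ⟨⟨k, l⟩, hx⟩
      rw [Finset.HasAntidiagonal.mem_antidiagonal] at hx
      simp only [hf2, hD, Finset.HasAntidiagonal.sigmaAntidiagonalEquivProd_apply]
      rw [← hx]
      push_cast
      ring_nf
    have := hasSum_fintype (fun x : Finset.HasAntidiagonal.antidiagonal n =>
      f2 (Finset.HasAntidiagonal.sigmaAntidiagonalEquivProd ⟨n, x⟩))
    convert this using 1
    rw [show (∑ x : Finset.HasAntidiagonal.antidiagonal n, f2 (Finset.HasAntidiagonal.sigmaAntidiagonalEquivProd ⟨n, x⟩))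
        = ∑ x : Finset.HasAntidiagonal.antidiagonal n, a ^ (n + 1) / (((n : ℝ) + 1) * ((n : ℝ) + 2))
        from Finset.sum_congr rfl fun x _ => hconst x]
    rw [Finset.sum_const]
    simp only [hg]
    rw [Finset.card_univ, Fintype.card_coe, Finset.Nat.card_antidiagonal]
    rw [nsmul_eq_mul]
    have h1 : ((n:ℝ)+1) ≠ 0 := by positivity
    have h2 : ((n:ℝ)+2) ≠ 0 := by positivity
    push_cast
    field_simp
    ring
  have hshift : HasSum (fun n => g (n + 1)) (S - 1) := by
    have h0 : g 0 = 1 := by simp [hg]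
    rw [hasSum_nat_add_iff 1]
    simpa [h0] using hgS
  have hf2sig_nonneg : ∀ x : (Σ n : ℕ, Finset.HasAntidiagonal.antidiagonal n),
      0 ≤ f2 (Finset.HasAntidiagonal.sigmaAntidiagonalEquivProd x) := by
    intro x; have := hDpos (Finset.HasAntidiagonal.sigmaAntidiagonalEquivProd x); simp only [hf2]; positivity
  have hf2sig_summ : Summable (fun x : (Σ n : ℕ, Finset.HasAntidiagonal.antidiagonal n) =>
      f2 (Finset.HasAntidiagonal.sigmaAntidiagonalEquivProd x)) := by
    rw [summable_sigma_of_nonneg hf2sig_nonneg]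
    refine ⟨fun n => (fib2sum n).summable, ?_⟩
    have : (fun n => ∑' x : Finset.HasAntidiagonal.antidiagonal n,
        f2 (Finset.HasAntidiagonal.sigmaAntidiagonalEquivProd ⟨n, x⟩)) = fun n => g (n + 1) := by
      funext n; exact (fib2sum n).tsum_eq
    rw [this]
    exact hshift.summable
  have hf2S : HasSum f2 (S - 1) := by
    rw [← Finset.HasAntidiagonal.sigmaAntidiagonalEquivProd.hasSum_iff]
    have h := hf2sig_summ.hasSum
    have hs : HasSum (fun n => g (n + 1))
        (∑' x : (Σ n : ℕ, Finset.HasAntidiagonal.antidiagonal n),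
          f2 (Finset.HasAntidiagonal.sigmaAntidiagonalEquivProd x)) := by
      refine HasSum.sigma h fib2sum
    rwa [hs.unique hshift] at h
  -- combine
  have hmain := hf1S.sub hf2S
  have hring : (fun p : ℕ × ℕ =>
      ((1 - a ^ (p.2 + 1)) * a ^ p.1) /
        ((p.1 + (p.2 + 1) : ℝ) * (p.1 + (p.2 + 1) + 1))) = fun p => f1 p - f2 p := by
    funext p
    simp only [hf1, hf2, hD]
    rw [div_sub_div_same]
    have h1 : ((p.1 : ℝ) + ((p.2 : ℝ) + 1)) * ((p.1 : ℝ) + ((p.2 : ℝ) + 1) + 1)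
        = ((p.1 : ℝ) + p.2 + 1) * ((p.1 : ℝ) + p.2 + 2) := by ring
    rw [h1]
    congr 1
    rw [pow_add, pow_add, pow_add]
    ring
  rw [hring]
  simpa using hmain
end

section
/- For real numbers $a, b$ with $0 \le a, b < 1$ and any nonnegative integer $k$, one has $(1-a^2)(1-b^2) \left( \sum_{i=0}^{k} (k+1-i)(ab)^i \right)^2 \le (k+1)^2 (1-a^{2(k+1)})(1-b^{2(k+1)})$. -/
theorem stmt_3 (a b : ℝ) (ha0 : 0 ≤ a) (ha1 : a < 1) (hb0 : 0 ≤ b) (hb1 : b < 1) (k : ℕ) :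
    (1 - a ^ 2) * (1 - b ^ 2) *
        (∑ i ∈ Finset.range (k + 1), ((k + 1 - i : ℕ) : ℝ) * (a * b) ^ i) ^ 2 ≤
      ((k : ℝ) + 1) ^ 2 * (1 - a ^ (2 * (k + 1))) * (1 - b ^ (2 * (k + 1))) := by
  set c : ℕ → ℝ := fun i => ((k + 1 - i : ℕ) : ℝ) with hc
  have hcpos : ∀ i, 0 ≤ c i := fun i => Nat.cast_nonneg _
  have hcle : ∀ i ∈ Finset.range (k + 1), c i ≤ (k : ℝ) + 1 := by
    intro i _
    have : (k + 1 - i : ℕ) ≤ k + 1 := Nat.sub_le _ _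
    calc c i ≤ ((k + 1 : ℕ) : ℝ) := Nat.cast_le.mpr this
      _ = (k : ℝ) + 1 := by push_cast; ring
  -- geometric sum identity
  have geom : ∀ x : ℝ, 1 - x ^ (k + 1) = (1 - x) * ∑ i ∈ Finset.range (k + 1), x ^ i := by
    intro x
    have := geom_sum_mul x (k + 1)
    linarith [this]
  have ha2 : a ^ (2 * (k + 1)) = (a ^ 2) ^ (k + 1) := by rw [pow_mul]
  have hb2 : b ^ (2 * (k + 1)) = (b ^ 2) ^ (k + 1) := by rw [pow_mul]
  set A : ℝ := ∑ i ∈ Finset.range (k + 1), (a ^ 2) ^ i with hA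
  set B : ℝ := ∑ i ∈ Finset.range (k + 1), (b ^ 2) ^ i with hB
  have hAnn : 0 ≤ A := Finset.sum_nonneg fun i _ => pow_nonneg (sq_nonneg a) i
  have hBnn : 0 ≤ B := Finset.sum_nonneg fun i _ => pow_nonneg (sq_nonneg b) i
  -- Cauchy--Schwarz
  have CS := Finset.sum_mul_sq_le_sq_mul_sq (Finset.range (k + 1))
      (fun i => Real.sqrt (c i) * a ^ i) (fun i => Real.sqrt (c i) * b ^ i)
  have hfg : ∀ i ∈ Finset.range (k + 1),
      (Real.sqrt (c i) * a ^ i) * (Real.sqrt (c i) * b ^ i) = c i * (a * b) ^ i := by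
    intro i _
    rw [mul_pow]
    have : Real.sqrt (c i) * Real.sqrt (c i) = c i := Real.mul_self_sqrt (hcpos i)
    ring_nf
    rw [Real.sq_sqrt (hcpos i)]
    ring
  have hf2 : ∀ i ∈ Finset.range (k + 1),
      (Real.sqrt (c i) * a ^ i) ^ 2 = c i * (a ^ 2) ^ i := by
    intro i _
    rw [mul_pow, Real.sq_sqrt (hcpos i), ← pow_mul, ← pow_mul, Nat.mul_comm]
  have hg2 : ∀ i ∈ Finset.range (k + 1),
      (Real.sqrt (c i) * b ^ i) ^ 2 = c i * (b ^ 2) ^ i := by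
    intro i _
    rw [mul_pow, Real.sq_sqrt (hcpos i), ← pow_mul, ← pow_mul, Nat.mul_comm]
  rw [Finset.sum_congr rfl hfg, Finset.sum_congr rfl hf2, Finset.sum_congr rfl hg2] at CS
  -- bound weighted sums
  have hwa : ∑ i ∈ Finset.range (k + 1), c i * (a ^ 2) ^ i ≤ ((k : ℝ) + 1) * A := by
    rw [hA, Finset.mul_sum]
    exact Finset.sum_le_sum fun i hi =>
      mul_le_mul_of_nonneg_right (hcle i hi) (pow_nonneg (sq_nonneg a) i)
  have hwb : ∑ i ∈ Finset.range (k + 1), c i * (b ^ 2) ^ i ≤ ((k : ℝ) + 1) * B := by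
    rw [hB, Finset.mul_sum]
    exact Finset.sum_le_sum fun i hi =>
      mul_le_mul_of_nonneg_right (hcle i hi) (pow_nonneg (sq_nonneg b) i)
  have hkpos : (0 : ℝ) ≤ (k : ℝ) + 1 := by positivity
  have hwann : 0 ≤ ∑ i ∈ Finset.range (k + 1), c i * (a ^ 2) ^ i :=
    Finset.sum_nonneg fun i _ => mul_nonneg (hcpos i) (pow_nonneg (sq_nonneg a) i)
  have hwbnn : 0 ≤ ∑ i ∈ Finset.range (k + 1), c i * (b ^ 2) ^ i :=
    Finset.sum_nonneg fun i _ => mul_nonneg (hcpos i) (pow_nonneg (sq_nonneg b) i)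
  have key : (∑ i ∈ Finset.range (k + 1), c i * (a * b) ^ i) ^ 2
      ≤ ((k : ℝ) + 1) ^ 2 * A * B := by
    calc _ ≤ (∑ i ∈ Finset.range (k + 1), c i * (a ^ 2) ^ i) *
        (∑ i ∈ Finset.range (k + 1), c i * (b ^ 2) ^ i) := CS
      _ ≤ (((k : ℝ) + 1) * A) * (((k : ℝ) + 1) * B) :=
          mul_le_mul hwa hwb hwbnn (mul_nonneg hkpos hAnn)
      _ = ((k : ℝ) + 1) ^ 2 * A * B := by ring
  have ha1' : 0 ≤ 1 - a ^ 2 := by nlinarith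
  have hb1' : 0 ≤ 1 - b ^ 2 := by nlinarith
  calc (1 - a ^ 2) * (1 - b ^ 2) * (∑ i ∈ Finset.range (k + 1), c i * (a * b) ^ i) ^ 2
      ≤ (1 - a ^ 2) * (1 - b ^ 2) * (((k : ℝ) + 1) ^ 2 * A * B) := by
        exact mul_le_mul_of_nonneg_left key (mul_nonneg ha1' hb1')
    _ = ((k : ℝ) + 1) ^ 2 * ((1 - a ^ 2) * A) * ((1 - b ^ 2) * B) := by ring
    _ = ((k : ℝ) + 1) ^ 2 * (1 - a ^ (2 * (k + 1))) * (1 - b ^ (2 * (k + 1))) := by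
        rw [ha2, hb2, geom (a ^ 2), geom (b ^ 2)]
end

section
/- For real numbers $a, b$ with $0 \le a, b < 1$, the double series $\sum_{m \ge 0, k \ge 1} \frac{(a^{2m}+b^{2m})(1-a^{2k})(1-b^{2k})}{(m+k)(m+k+1)}$ is at most $2$. -/
open Finset

lemma diag_sum (d : ℝ) (N : ℕ) :
    ∑ n ∈ range N, ∑ p ∈ antidiagonal n,
      d ^ p.1 * (1 - d ^ (p.2 + 1)) / ((p.1 + p.2 + 1 : ℝ) * (p.1 + p.2 + 2))
    = 1 - ((∑ m ∈ range N, d ^ m) + d ^ N) / (N + 1) := by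
  induction N with
  | zero => simp
  | succ N ih =>
    rw [Finset.sum_range_succ, ih, Nat.sum_antidiagonal_eq_sum_range_succ_mk]
    have hdiag : ∑ k ∈ range (N + 1),
        d ^ (k, N - k).1 * (1 - d ^ ((k, N - k).2 + 1)) /
          (((k, N - k).1 + (k, N - k).2 + 1 : ℝ) * ((k, N - k).1 + (k, N - k).2 + 2))
        = ((∑ m ∈ range (N + 1), d ^ m) - (N + 1) * d ^ (N + 1)) /
            ((N + 1 : ℝ) * (N + 2)) := by
      have step : ∀ k ∈ range (N + 1),
          d ^ (k, N - k).1 * (1 - d ^ ((k, N - k).2 + 1)) /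
            (((k, N - k).1 + (k, N - k).2 + 1 : ℝ) * ((k, N - k).1 + (k, N - k).2 + 2))
          = (d ^ k - d ^ (N + 1)) / ((N + 1 : ℝ) * (N + 2)) := by
        intro k hk
        have hkN : k ≤ N := Nat.lt_succ_iff.mp (Finset.mem_range.mp hk)
        have h1 : k + (N - k) = N := Nat.add_sub_cancel' hkN
        have h2 : ((k : ℝ) + (N - k : ℕ) + 1) = (N : ℝ) + 1 := by
          rw [← Nat.cast_add, h1]
        have h3 : ((k : ℝ) + (N - k : ℕ) + 2) = (N : ℝ) + 2 := by
          rw [← Nat.cast_add, h1]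
        have h4 : d ^ k * d ^ (N - k + 1) = d ^ (N + 1) := by
          rw [← pow_add, ← Nat.add_assoc, h1]
        simp only [h2, h3]
        rw [mul_sub, mul_one, h4]
      rw [Finset.sum_congr rfl step, ← Finset.sum_div, Finset.sum_sub_distrib,
        Finset.sum_const, Finset.card_range, nsmul_eq_mul]
      push_cast
      ring
    rw [hdiag, Finset.sum_range_succ]
    have hN1 : (N : ℝ) + 1 ≠ 0 := by positivity
    have hN2 : (N : ℝ) + 2 ≠ 0 := by positivity
    push_cast
    field_simp
    ring

lemma key (d : ℝ) (hd0 : 0 ≤ d) (hd1 : d < 1) (s : Finset (ℕ × ℕ)) :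
    ∑ p ∈ s, d ^ p.1 * (1 - d ^ (p.2 + 1)) / ((p.1 + p.2 + 1 : ℝ) * (p.1 + p.2 + 2)) ≤ 1 := by
  set f : ℕ × ℕ → ℝ :=
    fun p => d ^ p.1 * (1 - d ^ (p.2 + 1)) / ((p.1 + p.2 + 1 : ℝ) * (p.1 + p.2 + 2)) with hf
  have hnonneg : ∀ p : ℕ × ℕ, 0 ≤ f p := by
    intro p
    have h1 : d ^ (p.2 + 1) ≤ 1 := pow_le_one₀ hd0 hd1.le
    have : (0:ℝ) < (p.1 + p.2 + 1 : ℝ) * (p.1 + p.2 + 2) := by positivity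
    have h2 : (0:ℝ) ≤ d ^ p.1 * (1 - d ^ (p.2 + 1)) := by
      apply mul_nonneg (pow_nonneg hd0 _); linarith
    exact div_nonneg h2 this.le
  set N := (s.sup fun p => p.1 + p.2) + 1 with hN
  have hsub : s ⊆ (range N).biUnion antidiagonal := by
    intro p hp
    refine Finset.mem_biUnion.mpr ⟨p.1 + p.2, ?_, ?_⟩
    · exact Finset.mem_range.mpr (Nat.lt_succ_of_le (Finset.le_sup (f := fun p => p.1 + p.2) hp))
    · simp
  have hdisj : (↑(range N) : Set ℕ).PairwiseDisjoint antidiagonal := by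
    intro m _ n _ hmn
    simp only [Finset.disjoint_left]
    intro p hpm hpn
    exact hmn ((Finset.HasAntidiagonal.mem_antidiagonal.mp hpm).symm.trans (Finset.HasAntidiagonal.mem_antidiagonal.mp hpn))
  calc ∑ p ∈ s, f p ≤ ∑ p ∈ (range N).biUnion antidiagonal, f p :=
        Finset.sum_le_sum_of_subset_of_nonneg hsub fun p _ _ => hnonneg p
    _ = ∑ n ∈ range N, ∑ p ∈ antidiagonal n, f p := Finset.sum_biUnion hdisj
    _ = 1 - ((∑ m ∈ range N, d ^ m) + d ^ N) / (N + 1) := diag_sum d N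
    _ ≤ 1 := by
        have h1 : (0:ℝ) ≤ ∑ m ∈ range N, d ^ m :=
          Finset.sum_nonneg fun m _ => pow_nonneg hd0 m
        have h2 : (0:ℝ) ≤ d ^ N := pow_nonneg hd0 N
        have h3 : (0:ℝ) < (N : ℝ) + 1 := by positivity
        have : 0 ≤ ((∑ m ∈ range N, d ^ m) + d ^ N) / (N + 1) := by positivity
        linarith

theorem stmt_4 (a b : ℝ) (ha0 : 0 ≤ a) (ha1 : a < 1) (hb0 : 0 ≤ b) (hb1 : b < 1) :
    ∑' p : ℕ × ℕ,
        ((a ^ (2 * p.1) + b ^ (2 * p.1)) * (1 - a ^ (2 * (p.2 + 1))) *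
            (1 - b ^ (2 * (p.2 + 1)))) /
          ((p.1 + (p.2 + 1) : ℝ) * (p.1 + (p.2 + 1) + 1)) ≤ 2 := by
  set t : ℕ × ℕ → ℝ := fun p =>
    ((a ^ (2 * p.1) + b ^ (2 * p.1)) * (1 - a ^ (2 * (p.2 + 1))) *
        (1 - b ^ (2 * (p.2 + 1)))) /
      ((p.1 + (p.2 + 1) : ℝ) * (p.1 + (p.2 + 1) + 1)) with ht
  by_cases hs : Summable t
  · refine Summable.tsum_le_of_sum_le hs fun s => ?_
    have ha2 : 0 ≤ a ^ 2 := sq_nonneg a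
    have ha2' : a ^ 2 < 1 := by nlinarith
    have hb2 : 0 ≤ b ^ 2 := sq_nonneg b
    have hb2' : b ^ 2 < 1 := by nlinarith
    have hptwise : ∀ p : ℕ × ℕ, t p ≤
        (a ^ 2) ^ p.1 * (1 - (a ^ 2) ^ (p.2 + 1)) / ((p.1 + p.2 + 1 : ℝ) * (p.1 + p.2 + 2)) +
        (b ^ 2) ^ p.1 * (1 - (b ^ 2) ^ (p.2 + 1)) / ((p.1 + p.2 + 1 : ℝ) * (p.1 + p.2 + 2)) := by
      intro p
      have hden : (0:ℝ) < (p.1 + p.2 + 1 : ℝ) * (p.1 + p.2 + 2) := by positivity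
      have hden' : ((p.1 : ℝ) + (p.2 + 1)) * ((p.1 : ℝ) + (p.2 + 1) + 1)
          = (p.1 + p.2 + 1 : ℝ) * (p.1 + p.2 + 2) := by ring
      have e1 : a ^ (2 * p.1) = (a ^ 2) ^ p.1 := by rw [pow_mul]
      have e2 : b ^ (2 * p.1) = (b ^ 2) ^ p.1 := by rw [pow_mul]
      have e3 : a ^ (2 * (p.2 + 1)) = (a ^ 2) ^ (p.2 + 1) := by rw [pow_mul]
      have e4 : b ^ (2 * (p.2 + 1)) = (b ^ 2) ^ (p.2 + 1) := by rw [pow_mul]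
      rw [ht]
      simp only [e1, e2, e3, e4, hden']
      rw [← add_div, div_le_div_iff_of_pos_right hden]
      have hx : (0:ℝ) ≤ (a ^ 2) ^ p.1 := pow_nonneg ha2 _
      have hy : (0:ℝ) ≤ (b ^ 2) ^ p.1 := pow_nonneg hb2 _
      have hu1 : (a ^ 2) ^ (p.2 + 1) ≤ 1 := pow_le_one₀ ha2 ha2'.le
      have hu0 : (0:ℝ) ≤ (a ^ 2) ^ (p.2 + 1) := pow_nonneg ha2 _
      have hv1 : (b ^ 2) ^ (p.2 + 1) ≤ 1 := pow_le_one₀ hb2 hb2'.le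
      have hv0 : (0:ℝ) ≤ (b ^ 2) ^ (p.2 + 1) := pow_nonneg hb2 _
      nlinarith [mul_nonneg hx (mul_nonneg (sub_nonneg.mpr hu1) hv0),
        mul_nonneg hy (mul_nonneg hu0 (sub_nonneg.mpr hv1))]
    calc ∑ p ∈ s, t p
        ≤ ∑ p ∈ s, ((a ^ 2) ^ p.1 * (1 - (a ^ 2) ^ (p.2 + 1)) /
              ((p.1 + p.2 + 1 : ℝ) * (p.1 + p.2 + 2)) +
            (b ^ 2) ^ p.1 * (1 - (b ^ 2) ^ (p.2 + 1)) /
              ((p.1 + p.2 + 1 : ℝ) * (p.1 + p.2 + 2))) :=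
          Finset.sum_le_sum fun p _ => hptwise p
      _ = (∑ p ∈ s, (a ^ 2) ^ p.1 * (1 - (a ^ 2) ^ (p.2 + 1)) /
              ((p.1 + p.2 + 1 : ℝ) * (p.1 + p.2 + 2))) +
          ∑ p ∈ s, (b ^ 2) ^ p.1 * (1 - (b ^ 2) ^ (p.2 + 1)) /
              ((p.1 + p.2 + 1 : ℝ) * (p.1 + p.2 + 2)) := Finset.sum_add_distrib
      _ ≤ 1 + 1 := add_le_add (key _ ha2 ha2' s) (key _ hb2 hb2' s)
      _ = 2 := by norm_num
  · rw [tsum_eq_zero_of_not_summable hs]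
    norm_num
end

section
/- Let $\theta : \mathbb{D} \to \mathbb{C}$ be an analytic function with $|\theta(z)| \le 1$ for all $z$ in the open unit disk $\mathbb{D}$. Then the de Branges–Rovnyak kernel $R(z, \lambda) = \frac{1 - \overline{\theta(\lambda)} \theta(z)}{1 - \bar{\lambda} z}$ is a positive semidefinite kernel on $\mathbb{D}$. -/
open ComplexConjugate ComplexOrder Metric Real Filter

noncomputable section DBRaux

/-- The Szegő-type kernel function for the disk of radius `r`. -/
def dbrKer (r : ℝ) (a w : ℂ) : ℂ := (1 - conj a * w / (r : ℂ) ^ 2)⁻¹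

lemma dbr_denom_ne {r : ℝ} (hr : 0 < r) {a w : ℂ} (ha : ‖a‖ < r) (hw : ‖w‖ ≤ r) :
    (1 : ℂ) - conj a * w / (r : ℂ) ^ 2 ≠ 0 := by
  intro h
  have h1 : ‖conj a * w / (r : ℂ) ^ 2‖ < 1 := by
    rw [norm_div, norm_mul]
    have : ‖((r : ℂ)) ^ 2‖ = r ^ 2 := by
      rw [norm_pow, Complex.norm_real, Real.norm_eq_abs, abs_of_pos hr]
    rw [this, RCLike.norm_conj]
    rw [div_lt_one (by positivity)]
    calc ‖a‖ * ‖w‖ ≤ ‖a‖ * r := by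
            exact mul_le_mul_of_nonneg_left hw (norm_nonneg _)
      _ < r * r := by exact mul_lt_mul_of_pos_right ha hr
      _ = r ^ 2 := (sq r).symm
  have h2 : conj a * w / (r : ℂ) ^ 2 = 1 := by linear_combination -h
  rw [h2] at h1; simp at h1

lemma dbrKer_diffOn {r : ℝ} (hr : 0 < r) {a : ℂ} (ha : ‖a‖ < r) :
    DifferentiableOn ℂ (dbrKer r a) (closedBall 0 r) := by
  apply DifferentiableOn.inv
  · apply DifferentiableOn.sub (differentiableOn_const _)
    exact ((differentiable_const _).mul differentiable_id).differentiableOn.div_const _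
  · intro w hw
    exact dbr_denom_ne hr ha (by simpa [mem_closedBall, Complex.dist_eq] using hw)

/-- Convert differentiability on the closed ball to `DiffContOnCl` on the open ball. -/
lemma dbr_dcc {r : ℝ} (hr : 0 < r) {f : ℂ → ℂ} (hf : DifferentiableOn ℂ f (closedBall 0 r)) :
    DiffContOnCl ℂ f (ball 0 r) :=
  ⟨hf.mono ball_subset_closedBall, by
    rw [closure_ball (0 : ℂ) hr.ne']; exact hf.continuousOn⟩

lemma dbr_cont_circle {r : ℝ} (hr : 0 < r) {f : ℂ → ℂ}
    (hf : DifferentiableOn ℂ f (closedBall 0 r)) :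
    Continuous fun t : ℝ => f (circleMap 0 r t) := by
  apply hf.continuousOn.comp_continuous (continuous_circleMap _ _)
  intro t
  simp [mem_closedBall, Complex.dist_eq, abs_of_pos hr]

/-- The reproducing property of the kernel, via Cauchy's integral formula. -/
lemma dbr_repro {r : ℝ} (hr : 0 < r) {f : ℂ → ℂ}
    (hf : DifferentiableOn ℂ f (closedBall 0 r)) {a : ℂ} (ha : ‖a‖ < r) :
    ∫ t in (0:ℝ)..(2 * π), f (circleMap 0 r t) * conj (dbrKer r a (circleMap 0 r t))
      = 2 * π * f a := by
  have hmem : a ∈ ball (0 : ℂ) r := by simpa [mem_ball, Complex.dist_eq] using ha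
  have h := (dbr_dcc hr hf).circleIntegral_sub_inv_smul hmem
  rw [circleIntegral] at h
  have key : ∀ t : ℝ, deriv (circleMap 0 r) t •
      ((circleMap 0 r t - a)⁻¹ • f (circleMap 0 r t))
      = Complex.I * (f (circleMap 0 r t) * conj (dbrKer r a (circleMap 0 r t))) := by
    intro t
    set w := circleMap 0 r t with hwdef
    have hw0 : w ≠ 0 := circleMap_ne_center hr.ne'
    have hwc : w * conj w = (r : ℂ) ^ 2 := by
      rw [Complex.mul_conj, Complex.normSq_eq_norm_sq, norm_circleMap_zero, abs_of_pos hr]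
      push_cast; ring
    have hr0 : ((r : ℂ)) ≠ 0 := by exact_mod_cast hr.ne'
    have hcw : conj w = (r : ℂ) ^ 2 / w := by
      rw [eq_div_iff hw0]; linear_combination hwc
    have hker : conj (dbrKer r a w) = w * (w - a)⁻¹ := by
      rw [dbrKer, map_inv₀, map_sub, map_one, map_div₀, map_mul, Complex.conj_conj]
      have hcr : conj ((r : ℂ) ^ 2) = (r : ℂ) ^ 2 := by
        rw [map_pow, Complex.conj_ofReal]
      rw [hcr, hcw]
      have : (1 : ℂ) - a * ((r : ℂ) ^ 2 / w) / (r : ℂ) ^ 2 = (w - a) / w := by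
        field_simp
      rw [this, inv_div, div_eq_mul_inv]
    rw [deriv_circleMap, smul_eq_mul, smul_eq_mul, hker]
    ring
  rw [intervalIntegral.integral_congr (fun t _ => key t)] at h
  rw [intervalIntegral.integral_const_mul] at h
  have hI : (2 * (π:ℂ) * Complex.I) • f a = Complex.I * (2 * π * f a) := by
    rw [smul_eq_mul]; ring
  rw [hI] at h
  exact mul_left_cancel₀ Complex.I_ne_zero h


lemma dbr_cont_ker {r : ℝ} (hr : 0 < r) {a : ℂ} (ha : ‖a‖ < r) :
    Continuous fun t : ℝ => dbrKer r a (circleMap 0 r t) :=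
  dbr_cont_circle hr (dbrKer_diffOn hr ha)

/-- Gram identity: integrating an analytic function against a combination of kernels. -/
lemma dbr_gram {r : ℝ} (hr : 0 < r) {f : ℂ → ℂ}
    (hf : DifferentiableOn ℂ f (closedBall 0 r))
    {m : ℕ} {z : Fin m → ℂ} (hz : ∀ j, ‖z j‖ < r) (e : Fin m → ℂ) :
    ∫ t in (0:ℝ)..(2 * π),
        f (circleMap 0 r t) * conj (∑ j, e j * dbrKer r (z j) (circleMap 0 r t))
      = 2 * π * ∑ j, conj (e j) * f (z j) := by
  have hint : ∀ j : Fin m, IntervalIntegrable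
      (fun t => conj (e j) * (f (circleMap 0 r t) * conj (dbrKer r (z j) (circleMap 0 r t))))
      MeasureTheory.volume 0 (2 * π) := by
    intro j
    apply Continuous.intervalIntegrable
    exact continuous_const.mul ((dbr_cont_circle hr hf).mul
      (Complex.continuous_conj.comp (dbr_cont_ker hr (hz j))))
  have hpt : ∀ t : ℝ,
      f (circleMap 0 r t) * conj (∑ j, e j * dbrKer r (z j) (circleMap 0 r t))
        = ∑ j, conj (e j) * (f (circleMap 0 r t) * conj (dbrKer r (z j) (circleMap 0 r t))) := by
    intro t
    rw [map_sum, Finset.mul_sum]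
    apply Finset.sum_congr rfl
    intro j _
    rw [map_mul]; ring
  rw [intervalIntegral.integral_congr (fun t _ => hpt t),
    intervalIntegral.integral_finset_sum (fun j _ => hint j), Finset.mul_sum]
  apply Finset.sum_congr rfl
  intro j _
  rw [intervalIntegral.integral_const_mul, dbr_repro hr hf (hz j)]
  ring


lemma dbr_key (θ : ℂ → ℂ) (hθa : DifferentiableOn ℂ θ (ball (0:ℂ) 1))
    (hθb : ∀ z ∈ ball (0:ℂ) 1, ‖θ z‖ ≤ 1)
    {r : ℝ} (hr0 : 0 < r) (hr1 : r < 1) {m : ℕ} {z : Fin m → ℂ} (hz : ∀ i, ‖z i‖ < r)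
    (c : Fin m → ℂ) :
    ∃ s : ℝ, 0 ≤ s ∧
      ∑ i, ∑ j, conj (c i) * c j *
        ((1 - conj (θ (z j)) * θ (z i)) / (1 - conj (z j) * z i / (r : ℂ) ^ 2)) = (s : ℂ) := by
  have hθcb : DifferentiableOn ℂ θ (closedBall 0 r) :=
    hθa.mono (closedBall_subset_ball hr1)
  have hVd : DifferentiableOn ℂ (fun w => ∑ i, c i * dbrKer r (z i) w) (closedBall 0 r) :=
    DifferentiableOn.fun_sum fun i _ => (differentiableOn_const _).mul (dbrKer_diffOn hr0 (hz i))
  have hHd : DifferentiableOn ℂ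
      (fun w => ∑ i, (c i * conj (θ (z i))) * dbrKer r (z i) w) (closedBall 0 r) :=
    DifferentiableOn.fun_sum fun i _ => (differentiableOn_const _).mul (dbrKer_diffOn hr0 (hz i))
  have hθHd : DifferentiableOn ℂ
      (fun w => θ w * ∑ i, (c i * conj (θ (z i))) * dbrKer r (z i) w) (closedBall 0 r) :=
    hθcb.mul hHd
  have contV : Continuous fun t : ℝ => ∑ i, c i * dbrKer r (z i) (circleMap 0 r t) :=
    dbr_cont_circle hr0 hVd
  have contH : Continuous fun t : ℝ =>
      ∑ i, (c i * conj (θ (z i))) * dbrKer r (z i) (circleMap 0 r t) :=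
    dbr_cont_circle hr0 hHd
  have contθ : Continuous fun t : ℝ => θ (circleMap 0 r t) := dbr_cont_circle hr0 hθcb
  -- the three Gram identities
  have hA := dbr_gram hr0 hVd hz c
  have hB := dbr_gram hr0 hHd hz (fun i => c i * conj (θ (z i)))
  have hC := dbr_gram hr0 hθHd hz c
  -- real-valued expressions for the diagonal integrals
  set IV : ℝ := ∫ t in (0:ℝ)..(2*π),
      Complex.normSq (∑ i, c i * dbrKer r (z i) (circleMap 0 r t)) with hIVdef
  set IH : ℝ := ∫ t in (0:ℝ)..(2*π),
      Complex.normSq (∑ i, (c i * conj (θ (z i))) * dbrKer r (z i) (circleMap 0 r t)) with hIHdef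
  have hArl : (∫ t in (0:ℝ)..(2*π),
      (∑ i, c i * dbrKer r (z i) (circleMap 0 r t)) *
        conj (∑ j, c j * dbrKer r (z j) (circleMap 0 r t))) = (IV : ℂ) := by
    rw [hIVdef, ← intervalIntegral.integral_ofReal]
    apply intervalIntegral.integral_congr
    intro t _
    exact Complex.mul_conj _
  have hBrl : (∫ t in (0:ℝ)..(2*π),
      (∑ i, (c i * conj (θ (z i))) * dbrKer r (z i) (circleMap 0 r t)) *
        conj (∑ j, (c j * conj (θ (z j))) * dbrKer r (z j) (circleMap 0 r t))) = (IH : ℂ) := by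
    rw [hIHdef, ← intervalIntegral.integral_ofReal]
    apply intervalIntegral.integral_congr
    intro t _
    exact Complex.mul_conj _
  rw [hArl] at hA
  rw [hBrl] at hB
  -- the B and C right-hand sides agree
  have hBC : (∑ j, conj (c j * conj (θ (z j))) *
        (∑ i, (c i * conj (θ (z i))) * dbrKer r (z i) (z j)))
      = ∑ j, conj (c j) *
        (θ (z j) * ∑ i, (c i * conj (θ (z i))) * dbrKer r (z i) (z j)) := by
    apply Finset.sum_congr rfl
    intro j _
    rw [map_mul, Complex.conj_conj]
    ring
  rw [hBC] at hB
  rw [← hC] at hB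
  -- bound the mixed integral
  have hIH0 : (0:ℝ) ≤ IH := by
    rw [hIHdef]
    apply intervalIntegral.integral_nonneg (by positivity)
    intro t _
    exact Complex.normSq_nonneg _
  have hIV0 : (0:ℝ) ≤ IV := by
    rw [hIVdef]
    apply intervalIntegral.integral_nonneg (by positivity)
    intro t _
    exact Complex.normSq_nonneg _
  have hIHIV : IH ≤ IV := by
    have hnorm : ‖(IH : ℂ)‖ ≤ (IH + IV) / 2 := by
      rw [hB]
      calc ‖∫ t in (0:ℝ)..(2*π),
            (θ (circleMap 0 r t) * ∑ i, (c i * conj (θ (z i))) * dbrKer r (z i) (circleMap 0 r t)) *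
              conj (∑ j, c j * dbrKer r (z j) (circleMap 0 r t))‖
          ≤ ∫ t in (0:ℝ)..(2*π),
            ‖(θ (circleMap 0 r t) * ∑ i, (c i * conj (θ (z i))) * dbrKer r (z i) (circleMap 0 r t)) *
              conj (∑ j, c j * dbrKer r (z j) (circleMap 0 r t))‖ :=
            intervalIntegral.norm_integral_le_integral_norm (by positivity)
        _ ≤ ∫ t in (0:ℝ)..(2*π),
            (Complex.normSq (∑ i, (c i * conj (θ (z i))) * dbrKer r (z i) (circleMap 0 r t)) +
              Complex.normSq (∑ j, c j * dbrKer r (z j) (circleMap 0 r t))) / 2 := by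
            apply intervalIntegral.integral_mono_on (by positivity)
            · exact (((contθ.mul contH).mul (Complex.continuous_conj.comp contV)).norm).intervalIntegrable _ _
            · exact (((Complex.continuous_normSq.comp contH).add
                (Complex.continuous_normSq.comp contV)).div_const 2).intervalIntegrable _ _
            · intro t _
              have hθ1 : ‖θ (circleMap 0 r t)‖ ≤ 1 := by
                apply hθb
                simp [mem_ball, Complex.dist_eq, abs_of_pos hr0, hr1]
              rw [norm_mul, norm_mul, RCLike.norm_conj,
                Complex.normSq_eq_norm_sq, Complex.normSq_eq_norm_sq]
              set a := ‖∑ i, (c i * conj (θ (z i))) * dbrKer r (z i) (circleMap 0 r t)‖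
              set b := ‖∑ j, c j * dbrKer r (z j) (circleMap 0 r t)‖
              have ha : (0:ℝ) ≤ a := norm_nonneg _
              have hb : (0:ℝ) ≤ b := norm_nonneg _
              nlinarith [sq_nonneg (a - b), mul_nonneg ha hb,
                mul_le_mul_of_nonneg_right (mul_le_mul_of_nonneg_right hθ1 ha) hb]
        _ = (IH + IV) / 2 := by
            have cH2 : Continuous fun t : ℝ => Complex.normSq
                (∑ i, (c i * conj (θ (z i))) * dbrKer r (z i) (circleMap 0 r t)) :=
              Complex.continuous_normSq.comp contH
            have cV2 : Continuous fun t : ℝ => Complex.normSq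
                (∑ i, c i * dbrKer r (z i) (circleMap 0 r t)) :=
              Complex.continuous_normSq.comp contV
            rw [intervalIntegral.integral_div, intervalIntegral.integral_add
              (cH2.intervalIntegrable _ _) (cV2.intervalIntegrable _ _), hIHdef, hIVdef]
    rw [Complex.norm_real, Real.norm_eq_abs, abs_of_nonneg hIH0] at hnorm
    linarith
  -- assemble: the quadratic form equals a nonnegative real
  refine ⟨(IV - IH) / (2 * π), div_nonneg (by linarith) (by positivity), ?_⟩
  have h2π : ((2:ℂ) * (π:ℂ)) ≠ 0 := by
    simp [Real.pi_ne_zero]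
  have halg : ∑ i, ∑ j, conj (c i) * c j *
      ((1 - conj (θ (z j)) * θ (z i)) / (1 - conj (z j) * z i / (r : ℂ) ^ 2))
      = (∑ j, conj (c j) * (∑ i, c i * dbrKer r (z i) (z j)))
        - ∑ j, conj (c j * conj (θ (z j))) *
            (∑ i, (c i * conj (θ (z i))) * dbrKer r (z i) (z j)) := by
    rw [← Finset.sum_sub_distrib]
    apply Finset.sum_congr rfl
    intro a _
    rw [map_mul, Complex.conj_conj, Finset.mul_sum, Finset.mul_sum, ← Finset.sum_sub_distrib]
    apply Finset.sum_congr rfl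
    intro b _
    rw [dbrKer, div_eq_mul_inv]
    ring
  rw [halg]
  have hP : (∑ j, conj (c j) * (∑ i, c i * dbrKer r (z i) (z j))) = (IV : ℂ) / (2 * π) := by
    rw [eq_div_iff h2π, hA]; ring
  have hQ : (∑ j, conj (c j * conj (θ (z j))) *
      (∑ i, (c i * conj (θ (z i))) * dbrKer r (z i) (z j))) = (IH : ℂ) / (2 * π) := by
    rw [eq_div_iff h2π, hBC]
    linear_combination - hC - hB
  rw [hP, hQ]
  push_cast
  ring


lemma dbr_one_sub_ne {a b : ℂ} (ha : ‖a‖ < 1) (hb : ‖b‖ < 1) :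
    (1 : ℂ) - conj a * b ≠ 0 := by
  intro h
  have h2 : conj a * b = 1 := by linear_combination -h
  have h1 : ‖conj a * b‖ < 1 := by
    rw [norm_mul, RCLike.norm_conj]
    nlinarith [norm_nonneg a, norm_nonneg b]
  rw [h2] at h1; simp at h1

end DBRaux

/-- A positive semidefinite kernel on a set `Ω`: Hermitian, and every finite
Gram quadratic form is nonnegative (as a complex number, i.e. real and `≥ 0`). -/
def IsPSDKernel {Ω : Type*} (K : Ω → Ω → ℂ) : Prop :=
  (∀ x y, K x y = conj (K y x)) ∧
    ∀ (m : ℕ) (x : Fin m → Ω) (c : Fin m → ℂ),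
      0 ≤ ∑ i, ∑ j, conj (c i) * c j * K (x i) (x j)

theorem stmt_8 (θ : ℂ → ℂ)
    (hθa : DifferentiableOn ℂ θ (Metric.ball (0 : ℂ) 1))
    (hθb : ∀ z ∈ Metric.ball (0 : ℂ) 1, ‖θ z‖ ≤ 1) :
    IsPSDKernel (fun z l : Metric.ball (0 : ℂ) 1 =>
      (1 - conj (θ l) * θ z) / (1 - conj (l : ℂ) * z)) := by
  constructor
  · intro x y
    simp only [map_div₀, map_sub, map_one, map_mul, Complex.conj_conj]
    ring
  · intro m x c
    set z : Fin m → ℂ := fun i => (x i : ℂ) with hzdef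
    have hz1 : ∀ i, ‖z i‖ < 1 := by
      intro i
      exact mem_ball_zero_iff.mp (x i).2
    obtain ⟨ρ, hρ0, hρ1, hρz⟩ : ∃ ρ : ℝ, 0 < ρ ∧ ρ < 1 ∧ ∀ i, ‖z i‖ < ρ := by
      rcases isEmpty_or_nonempty (Fin m) with h | h
      · exact ⟨1/2, by norm_num, by norm_num, fun i => isEmptyElim i⟩
      · have hne : (Finset.univ : Finset (Fin m)).Nonempty := Finset.univ_nonempty
        set M := Finset.univ.sup' hne (fun i => ‖z i‖) with hM
        have hM1 : M < 1 := by
          obtain ⟨i, _, hi⟩ := Finset.exists_mem_eq_sup' hne (fun i => ‖z i‖)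
          rw [hM, hi]; exact hz1 i
        have hM0 : 0 ≤ M := by
          obtain ⟨i⟩ := h
          refine le_trans (norm_nonneg (z i)) ?_
          rw [hM]; exact Finset.le_sup' (fun i => ‖z i‖) (Finset.mem_univ i)
        refine ⟨(M + 1) / 2, by linarith, by linarith, fun i => ?_⟩
        have : ‖z i‖ ≤ M := by rw [hM]; exact Finset.le_sup' (fun i => ‖z i‖) (Finset.mem_univ i)
        linarith
    set G : ℝ → ℂ := fun r => ∑ i, ∑ j, conj (c i) * c j *
      ((1 - conj (θ (z j)) * θ (z i)) / (1 - conj (z j) * z i / (r : ℂ) ^ 2)) with hG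
    have hgoal : (∑ i, ∑ j, conj (c i) * c j *
        ((1 - conj (θ (z j)) * θ (z i)) / (1 - conj (z j) * z i))) = G 1 := by
      rw [hG]
      apply Finset.sum_congr rfl; intro i _
      apply Finset.sum_congr rfl; intro j _
      norm_num
    have hcont : ContinuousAt G 1 := by
      rw [hG]
      apply tendsto_finset_sum
      intro i _
      apply tendsto_finset_sum
      intro j _
      apply ContinuousAt.mul continuousAt_const
      apply ContinuousAt.div continuousAt_const
      · exact continuousAt_const.sub (ContinuousAt.div continuousAt_const
          ((Complex.continuous_ofReal.continuousAt).pow 2) (by norm_num))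
      · have : ((1:ℝ) : ℂ) ^ 2 = 1 := by norm_num
        rw [this, div_one]
        exact dbr_one_sub_ne (hz1 j) (hz1 i)
    have hlim : Tendsto G (nhdsWithin 1 (Set.Iio 1)) (nhds (G 1)) :=
      hcont.continuousWithinAt
    have hev : ∀ᶠ r in nhdsWithin (1:ℝ) (Set.Iio 1), ∃ s : ℝ, 0 ≤ s ∧ G r = (s : ℂ) := by
      filter_upwards [Ioo_mem_nhdsLT_of_mem (show (1:ℝ) ∈ Set.Ioc ρ 1 from ⟨hρ1, le_refl 1⟩)]
        with r hr
      have hr0 : 0 < r := lt_trans hρ0 hr.1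
      exact dbr_key θ hθa hθb hr0 hr.2 (fun i => lt_trans (hρz i) hr.1) c
    have hre : 0 ≤ (G 1).re := by
      apply ge_of_tendsto (Complex.continuous_re.continuousAt.tendsto.comp hlim)
      filter_upwards [hev] with r hr
      obtain ⟨s, hs0, hGr⟩ := hr
      simp [Function.comp, hGr, hs0]
    have him : (G 1).im = 0 := by
      have h1 : Tendsto (fun r => (G r).im) (nhdsWithin 1 (Set.Iio 1)) (nhds (G 1).im) :=
        Complex.continuous_im.continuousAt.tendsto.comp hlim
      have h2 : Tendsto (fun r => (G r).im) (nhdsWithin (1:ℝ) (Set.Iio 1)) (nhds 0) := by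
        apply Tendsto.congr' _ tendsto_const_nhds
        filter_upwards [hev] with r hr
        obtain ⟨s, hs0, hGr⟩ := hr
        simp [hGr]
      exact tendsto_nhds_unique h1 h2
    have : (0 : ℂ) ≤ G 1 := by
      rw [Complex.le_def]
      exact ⟨by simpa using hre, by simp [him]⟩
    rw [← hgoal] at this; exact this
end

section
/- For the submodule $M = [z-w]$ of $H^2(\mathbb{D}^2)$ and for all $(a,b) \in \mathbb{D}^2$, define $\Sigma_1(a,b) = (1-|a|^2)(1-|b|^2) \sum_{k,l \ge 0} \left| \left\langle \frac{w \phi_k}{1-\bar{b}w}, \frac{z \psi_l}{1-\bar{a}z} \right\rangle \right|^2$, where $\phi_n(z,w) = \frac{1}{\sqrt{n+2}}(z e_n(z,w) - \sqrt{n+1} w^{n+1})$, $\psi_n(z,w) = \phi_n(w,z)$, and $e_n(z,w) = \frac{1}{\sqrt{n+1}} \sum_{i=0}^{n} z^{n-i} w^i$. Then $\Sigma_1(a,b) \le 2$ for all $(a,b) \in \mathbb{D}^2$. -/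
open ComplexConjugate

/- We model `H²(𝔻²)` by Taylor coefficients: a function `∑ c (i,j) zⁱ wʲ` is
represented by `c : ℕ × ℕ → ℂ`, and inner products are computed coefficientwise:
`⟨f, g⟩ = ∑ f (i,j) * conj (g (i,j))`. -/

/-- Coefficients of `e n (z,w) = (1/√(n+1)) ∑_{i=0}^n z^{n-i} w^i`. -/
noncomputable def eC (n : ℕ) : ℕ × ℕ → ℂ := fun p =>
  if p.1 + p.2 = n then (1 / Real.sqrt (n + 1) : ℝ) else 0

/-- Coefficients of `φ n = (z e n - √(n+1) w^{n+1}) / √(n+2)`,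
an orthonormal basis of `M ⊖ zM` for `M = [z-w]`. -/
noncomputable def φC (n : ℕ) : ℕ × ℕ → ℂ := fun p =>
  ((1 / Real.sqrt (n + 2) : ℝ) : ℂ) *
    ((if p.1 = 0 then 0 else eC n (p.1 - 1, p.2)) -
      ((Real.sqrt (n + 1) : ℝ) : ℂ) * (if p.1 = 0 ∧ p.2 = n + 1 then 1 else 0))

/-- Coefficients of `ψ n (z,w) = φ n (w,z)`,
an orthonormal basis of `M ⊖ wM` for `M = [z-w]`. -/
noncomputable def ψC (n : ℕ) : ℕ × ℕ → ℂ := fun p => φC n (p.2, p.1)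

/-- Coefficients of `w · φ k / (1 - b̄ w)`. -/
noncomputable def wSide (b : ℂ) (k : ℕ) : ℕ × ℕ → ℂ := fun p =>
  ∑ j ∈ Finset.range p.2, φC k (p.1, j) * (conj b) ^ (p.2 - 1 - j)

/-- Coefficients of `z · ψ l / (1 - ā z)`. -/
noncomputable def zSide (a : ℂ) (l : ℕ) : ℕ × ℕ → ℂ := fun p =>
  ∑ i ∈ Finset.range p.1, ψC l (i, p.2) * (conj a) ^ (p.1 - 1 - i)

/-- auxiliary: `D k = (k+1)(k+2)` as a real. -/
noncomputable def Dd (k : ℕ) : ℝ := ((k : ℝ) + 1) * ((k : ℝ) + 2)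

/-- auxiliary: `c k = 1/√((k+1)(k+2))`. -/
noncomputable def cc (k : ℕ) : ℝ := (1 / Real.sqrt ((k : ℝ) + 1)) * (1 / Real.sqrt ((k : ℝ) + 2))

lemma Dd_pos (k : ℕ) : 0 < Dd k := by unfold Dd; positivity

lemma Dd_mono {l k : ℕ} (h : l ≤ k) : Dd l ≤ Dd k := by
  unfold Dd
  have : (l : ℝ) ≤ (k : ℝ) := by exact_mod_cast h
  nlinarith [Nat.cast_nonneg (α := ℝ) l]

lemma cc_nonneg (k : ℕ) : 0 ≤ cc k := by unfold cc; positivity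

lemma cc_sq (k : ℕ) : (cc k) ^ 2 = 1 / Dd k := by
  unfold cc Dd
  have h1 : (0:ℝ) ≤ (k:ℝ) + 1 := by positivity
  have h2 : (0:ℝ) ≤ (k:ℝ) + 2 := by positivity
  rw [mul_pow, div_pow, div_pow, Real.sq_sqrt h1, Real.sq_sqrt h2]
  rw [one_pow, div_mul_div_comm, one_mul]

/-- `φC` is supported on the antidiagonal `i + j = k + 1`. -/
lemma phiC_eq_zero {k i j : ℕ} (h : i + j ≠ k + 1) : φC k (i, j) = 0 := by
  unfold φC eC
  rcases Nat.eq_zero_or_pos i with hi | hi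
  · subst hi
    have hj : j ≠ k + 1 := by omega
    simp [hj]
  · have hi' : i ≠ 0 := by omega
    have h2 : ¬ ((i - 1) + j = k) := by omega
    have h3 : ¬ (i = 0 ∧ j = k + 1) := by omega
    simp [hi', h2, h3]

lemma phiC_pos {k i j : ℕ} (hi : i ≠ 0) :
    φC k (i, j) = if i - 1 + j = k then ((cc k : ℝ) : ℂ) else 0 := by
  unfold φC eC cc
  have h3 : ¬ (i = 0 ∧ j = k + 1) := by omega
  rw [if_neg hi, if_neg h3, mul_zero, sub_zero]
  split_ifs with h
  · push_cast
    ring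
  · simp

lemma zSide_eq_wSide (a : ℂ) (l : ℕ) (i j : ℕ) : zSide a l (i, j) = wSide a l (j, i) := rfl

lemma wSide_zero_right (b : ℂ) (k i : ℕ) : wSide b k (i, 0) = 0 := by
  simp [wSide]

lemma zSide_zero_left (a : ℂ) (l j : ℕ) : zSide a l (0, j) = 0 := by
  simp [zSide]

/-- `wSide` vanishes when total degree is too low. -/
lemma wSide_zero_low {b : ℂ} {k i j : ℕ} (h : i + j ≤ k + 1) : wSide b k (i, j) = 0 := by
  unfold wSide
  apply Finset.sum_eq_zero
  intro jj hjj
  simp only [Finset.mem_range] at hjj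
  rw [phiC_eq_zero (by omega), zero_mul]

/-- `wSide` vanishes when the first index is too big. -/
lemma wSide_zero_high {b : ℂ} {k i j : ℕ} (h : k + 2 ≤ i) : wSide b k (i, j) = 0 := by
  unfold wSide
  apply Finset.sum_eq_zero
  intro jj hjj
  rw [phiC_eq_zero (by omega), zero_mul]

lemma wSide_norm_le {b : ℂ} {k i j : ℕ} (hi : i ≠ 0) :
    ‖wSide b k (i, j)‖ ≤ cc k * ‖b‖ ^ (i + j - (k + 2)) := by
  rcases le_or_gt i (k + 1) with hik | hik
  · unfold wSide
    have hcongr : ∀ jj ∈ Finset.range j,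
        φC k (i, jj) * (conj b) ^ (j - 1 - jj)
          = if jj = k + 1 - i then ((cc k : ℝ) : ℂ) * (conj b) ^ (j - 1 - jj) else 0 := by
      intro jj _
      rw [phiC_pos hi]
      have hiff : (i - 1 + jj = k) ↔ (jj = k + 1 - i) := by omega
      by_cases hcase : jj = k + 1 - i
      · rw [if_pos (hiff.mpr hcase), if_pos hcase]
      · rw [if_neg (fun hh => hcase (hiff.mp hh)), if_neg hcase, zero_mul]
    rw [Finset.sum_congr rfl hcongr, Finset.sum_ite_eq' (Finset.range j) (k + 1 - i)]
    split_ifs with hmem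
    · simp only [Finset.mem_range] at hmem
      rw [norm_mul, Complex.norm_real, norm_pow, RCLike.norm_conj]
      have he : j - 1 - (k + 1 - i) = i + j - (k + 2) := by omega
      rw [he, Real.norm_eq_abs, abs_of_nonneg (cc_nonneg k)]
    · simp only [norm_zero]
      exact mul_nonneg (cc_nonneg k) (pow_nonneg (norm_nonneg b) _)
  · rw [wSide_zero_high (by omega), norm_zero]
    exact mul_nonneg (cc_nonneg k) (pow_nonneg (norm_nonneg b) _)

/-- `Sw w m = ∑_{e=0}^{m} (m+1-e) w^e`. -/
noncomputable def Sw (w : ℝ) (m : ℕ) : ℝ :=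
  ∑ e ∈ Finset.range (m + 1), ((m + 1 - e : ℕ) : ℝ) * w ^ e

lemma Sw_nonneg {w : ℝ} (hw : 0 ≤ w) (m : ℕ) : 0 ≤ Sw w m := by
  unfold Sw
  apply Finset.sum_nonneg
  intro e _
  positivity

lemma gauss_real (n : ℕ) : ∑ i ∈ Finset.range n, (i : ℝ) = (n : ℝ) * ((n : ℝ) - 1) / 2 := by
  induction n with
  | zero => simp
  | succ n ih =>
    rw [Finset.sum_range_succ, ih]
    push_cast
    ring

lemma tri_sum_real (n : ℕ) :
    ∑ e ∈ Finset.range n, ((n - e : ℕ) : ℝ) = (n : ℝ) * ((n : ℝ) + 1) / 2 := by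
  have h := Finset.sum_range_reflect (fun e => ((n - e : ℕ) : ℝ)) n
  have h2 : ∀ j ∈ Finset.range n, ((n - (n - 1 - j) : ℕ) : ℝ) = ((j : ℝ) + 1) := by
    intro j hj
    rw [Finset.mem_range] at hj
    have he : n - (n - 1 - j) = j + 1 := by omega
    rw [he]
    push_cast
    ring
  rw [← h, Finset.sum_congr rfl h2, Finset.sum_add_distrib, Finset.sum_const, Finset.card_range,
    nsmul_eq_mul, mul_one, gauss_real]
  ring

lemma Sw_le_half {w : ℝ} (hw : 0 ≤ w) (hw1 : w ≤ 1) (m : ℕ) : Sw w m ≤ Dd m / 2 := by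
  unfold Sw Dd
  have h1 : ∀ e ∈ Finset.range (m + 1), ((m + 1 - e : ℕ) : ℝ) * w ^ e ≤ ((m + 1 - e : ℕ) : ℝ) := by
    intro e he
    have : w ^ e ≤ 1 := pow_le_one₀ hw hw1
    nlinarith [Nat.cast_nonneg (α := ℝ) (m + 1 - e)]
  calc ∑ e ∈ Finset.range (m + 1), ((m + 1 - e : ℕ) : ℝ) * w ^ e
      ≤ ∑ e ∈ Finset.range (m + 1), ((m + 1 - e : ℕ) : ℝ) := Finset.sum_le_sum h1
    _ = ((m + 1 : ℕ) : ℝ) * (((m + 1 : ℕ) : ℝ) + 1) / 2 := tri_sum_real (m + 1)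
    _ = ((m : ℝ) + 1) * ((m : ℝ) + 2) / 2 := by push_cast; ring

lemma geom_partial {x : ℝ} (hx : 0 ≤ x) (hx1 : x < 1) (n : ℕ) :
    ∑ d ∈ Finset.range n, x ^ d ≤ 1 / (1 - x) := by
  rw [geom_sum_eq (by intro h; rw [h] at hx1; exact lt_irrefl 1 hx1) n]
  have key : (x ^ n - 1) / (x - 1) = (1 - x ^ n) / (1 - x) := by
    rw [div_eq_div_iff (by linarith) (by linarith)]
    ring
  rw [key, div_le_div_iff₀ (by linarith) (by linarith)]
  nlinarith [pow_nonneg hx n]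

lemma Sw_le_lin {w : ℝ} (hw : 0 ≤ w) (hw1 : w < 1) (m : ℕ) :
    Sw w m ≤ ((m : ℝ) + 1) / (1 - w) := by
  unfold Sw
  calc ∑ e ∈ Finset.range (m + 1), ((m + 1 - e : ℕ) : ℝ) * w ^ e
      ≤ ∑ e ∈ Finset.range (m + 1), ((m : ℝ) + 1) * w ^ e := by
        apply Finset.sum_le_sum
        intro e he
        apply mul_le_mul_of_nonneg_right _ (pow_nonneg hw e)
        have : (m + 1 - e : ℕ) ≤ m + 1 := by omega
        exact_mod_cast le_trans (Nat.cast_le.mpr this) (by norm_num)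
    _ = ((m : ℝ) + 1) * ∑ e ∈ Finset.range (m + 1), w ^ e := by rw [Finset.mul_sum]
    _ ≤ ((m : ℝ) + 1) * (1 / (1 - w)) := by
        apply mul_le_mul_of_nonneg_left (geom_partial hw hw1 _) (by positivity)
    _ = ((m : ℝ) + 1) / (1 - w) := by ring

/-- counting the diagonal sums: the main combinatorial bound. -/
lemma count_sum (k l : ℕ) {w : ℝ} (hw : 0 ≤ w) :
    ∑ p ∈ Finset.range (k + 2) ×ˢ Finset.range (l + 2),
      (if 1 ≤ p.1 ∧ 1 ≤ p.2 ∧ max k l + 2 ≤ p.1 + p.2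
        then w ^ (p.1 + p.2 - (max k l + 2)) else 0)
      ≤ Sw w (min k l) := by
  classical
  set M := max k l with hM
  set m := min k l with hm
  have hMm : M + m = k + l := by rw [hM, hm]; exact max_add_min k l
  have hmk : m ≤ k := min_le_left k l
  have hml : m ≤ l := min_le_right k l
  have hkM : k ≤ M := le_max_left k l
  have hlM : l ≤ M := le_max_right k l
  rw [← Finset.sum_filter]
  set s := (Finset.range (k + 2) ×ˢ Finset.range (l + 2)).filter
      (fun p => 1 ≤ p.1 ∧ 1 ≤ p.2 ∧ M + 2 ≤ p.1 + p.2) with hs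
  have := Finset.sum_comp (fun e => w ^ e) (fun p : ℕ × ℕ => p.1 + p.2 - (M + 2)) (s := s)
  rw [this]
  have himage : Finset.image (fun p : ℕ × ℕ => p.1 + p.2 - (M + 2)) s ⊆ Finset.range (m + 1) := by
    intro e he
    rw [Finset.mem_image] at he
    obtain ⟨p, hp, hpe⟩ := he
    rw [hs, Finset.mem_filter, Finset.mem_product, Finset.mem_range, Finset.mem_range] at hp
    rw [Finset.mem_range]
    omega
  have hcard : ∀ e ∈ Finset.range (m + 1),
      (s.filter (fun p : ℕ × ℕ => p.1 + p.2 - (M + 2) = e)).card ≤ m + 1 - e := by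
    intro e _
    have hinj : Set.InjOn (fun p : ℕ × ℕ => p.1)
        ((s.filter (fun p : ℕ × ℕ => p.1 + p.2 - (M + 2) = e)) : Set (ℕ × ℕ)) := by
      intro p hp q hq hpq
      simp only [Finset.coe_filter, Set.mem_setOf_eq, hs, Finset.mem_filter,
        Finset.mem_product, Finset.mem_range] at hp hq
      obtain ⟨⟨⟨hp1, hp2⟩, hp3, hp4, hp5⟩, hp6⟩ := hp
      obtain ⟨⟨⟨hq1, hq2⟩, hq3, hq4, hq5⟩, hq6⟩ := hq
      have h1 : p.1 = q.1 := hpq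
      have h2 : p.2 = q.2 := by omega
      exact Prod.ext h1 h2
    have hmaps : ∀ p ∈ s.filter (fun p : ℕ × ℕ => p.1 + p.2 - (M + 2) = e),
        (fun p : ℕ × ℕ => p.1) p ∈ Finset.Icc (M + 2 + e - (l + 1)) (k + 1) := by
      intro p hp
      simp only [Finset.mem_filter, hs, Finset.mem_product, Finset.mem_range] at hp
      obtain ⟨⟨⟨hp1, hp2⟩, hp3, hp4, hp5⟩, hp6⟩ := hp
      simp only [Finset.mem_Icc]
      omega
    have := Finset.card_le_card_of_injOn _ hmaps hinj
    rw [Nat.card_Icc] at this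
    omega
  calc ∑ e ∈ Finset.image (fun p : ℕ × ℕ => p.1 + p.2 - (M + 2)) s,
        (s.filter (fun p : ℕ × ℕ => p.1 + p.2 - (M + 2) = e)).card • w ^ e
      ≤ ∑ e ∈ Finset.range (m + 1),
        (s.filter (fun p : ℕ × ℕ => p.1 + p.2 - (M + 2) = e)).card • w ^ e := by
        apply Finset.sum_le_sum_of_subset_of_nonneg himage
        intro e _ _
        positivity
    _ ≤ ∑ e ∈ Finset.range (m + 1), ((m + 1 - e : ℕ) : ℝ) * w ^ e := by
        apply Finset.sum_le_sum
        intro e he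
        rw [nsmul_eq_mul]
        exact mul_le_mul_of_nonneg_right (Nat.cast_le.mpr (hcard e he)) (pow_nonneg hw e)
    _ = Sw w m := rfl

lemma F_bound (a b : ℂ) (k l i j : ℕ) (hik : i < k + 2) (hjl : j < l + 2) :
    ‖wSide b k (i, j) * conj (zSide a l (i, j))‖ ≤
      cc k * cc l * (‖a‖ ^ (k - l) * ‖b‖ ^ (l - k)) *
        (if 1 ≤ i ∧ 1 ≤ j ∧ max k l + 2 ≤ i + j
          then (‖a‖ * ‖b‖) ^ (i + j - (max k l + 2)) else 0) := by
  have hM1 : k ≤ max k l := le_max_left k l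
  have hM2 : l ≤ max k l := le_max_right k l
  have hM3 : max k l = k ∨ max k l = l := max_choice k l
  split_ifs with hcond
  · obtain ⟨hi, hj, hd⟩ := hcond
    rw [norm_mul, RCLike.norm_conj]
    have hw := wSide_norm_le (b := b) (k := k) (i := i) (j := j) (by omega)
    have hz : ‖zSide a l (i, j)‖ ≤ cc l * ‖a‖ ^ (j + i - (l + 2)) := by
      rw [zSide_eq_wSide]
      exact wSide_norm_le (by omega)
    have hb : ‖b‖ ^ (i + j - (k + 2)) = ‖b‖ ^ (l - k) * ‖b‖ ^ (i + j - (max k l + 2)) := by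
      rw [← pow_add]
      congr 1
      omega
    have ha : ‖a‖ ^ (j + i - (l + 2)) = ‖a‖ ^ (k - l) * ‖a‖ ^ (i + j - (max k l + 2)) := by
      rw [← pow_add]
      congr 1
      omega
    calc ‖wSide b k (i, j)‖ * ‖zSide a l (i, j)‖
        ≤ (cc k * ‖b‖ ^ (i + j - (k + 2))) * (cc l * ‖a‖ ^ (j + i - (l + 2))) := by
          apply mul_le_mul hw hz (norm_nonneg _)
          exact mul_nonneg (cc_nonneg k) (pow_nonneg (norm_nonneg b) _)
      _ = cc k * cc l * (‖a‖ ^ (k - l) * ‖b‖ ^ (l - k)) *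
            (‖a‖ * ‖b‖) ^ (i + j - (max k l + 2)) := by
          rw [hb, ha, mul_pow]
          ring
  · rw [mul_zero]
    push_neg at hcond
    rcases Nat.eq_zero_or_pos i with hi | hi
    · subst hi
      rw [zSide_zero_left, map_zero, mul_zero, norm_zero]
    rcases Nat.eq_zero_or_pos j with hj | hj
    · subst hj
      rw [wSide_zero_right, zero_mul, norm_zero]
    have hd : i + j < max k l + 2 := by
      have := hcond (by omega) (by omega)
      omega
    rcases hM3 with h | h
    · rw [wSide_zero_low (by omega), zero_mul, norm_zero]
    · have : zSide a l (i, j) = 0 := by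
        rw [zSide_eq_wSide]
        exact wSide_zero_low (by omega)
      rw [this, map_zero, mul_zero, norm_zero]

lemma inner_bound (a b : ℂ) (k l : ℕ) :
    ‖∑' p : ℕ × ℕ, wSide b k p * conj (zSide a l p)‖ ≤
      cc k * cc l * (‖a‖ ^ (k - l) * ‖b‖ ^ (l - k)) * Sw (‖a‖ * ‖b‖) (min k l) := by
  have hoff : ∀ p : ℕ × ℕ, p ∉ Finset.range (k + 2) ×ˢ Finset.range (l + 2) →
      wSide b k p * conj (zSide a l p) = 0 := by
    intro p hp
    rw [Finset.mem_product, Finset.mem_range, Finset.mem_range] at hp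
    push_neg at hp
    rcases le_or_gt (k + 2) p.1 with h | h
    · have : wSide b k p = wSide b k (p.1, p.2) := rfl
      rw [this, wSide_zero_high h, zero_mul]
    · have h2 : l + 2 ≤ p.2 := hp h
      have : zSide a l p = wSide a l (p.2, p.1) := rfl
      rw [this, wSide_zero_high h2, map_zero, mul_zero]
  rw [tsum_eq_sum hoff]
  refine le_trans (norm_sum_le _ _) ?_
  have step : ∀ p ∈ Finset.range (k + 2) ×ˢ Finset.range (l + 2),
      ‖wSide b k p * conj (zSide a l p)‖ ≤
        cc k * cc l * (‖a‖ ^ (k - l) * ‖b‖ ^ (l - k)) *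
          (if 1 ≤ p.1 ∧ 1 ≤ p.2 ∧ max k l + 2 ≤ p.1 + p.2
            then (‖a‖ * ‖b‖) ^ (p.1 + p.2 - (max k l + 2)) else 0) := by
    intro p hp
    rw [Finset.mem_product, Finset.mem_range, Finset.mem_range] at hp
    exact F_bound a b k l p.1 p.2 hp.1 hp.2
  refine le_trans (Finset.sum_le_sum step) ?_
  rw [← Finset.mul_sum]
  apply mul_le_mul_of_nonneg_left (count_sum k l (by positivity))
  have := cc_nonneg k
  have := cc_nonneg l
  positivity

lemma tele_eq (a : ℕ) : ∀ N : ℕ,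
    ∑ l ∈ Finset.range N, (if a ≤ l then (1 / ((l : ℝ) + 1) - 1 / ((l : ℝ) + 2)) else 0)
      = 1 / (((min a N : ℕ) : ℝ) + 1) - 1 / ((N : ℝ) + 1) := by
  intro N
  induction N with
  | zero => simp
  | succ N ih =>
    rw [Finset.sum_range_succ, ih]
    rcases le_or_gt a N with h | h
    · rw [if_pos h, min_eq_left h, min_eq_left (by omega : a ≤ N + 1)]
      push_cast
      ring
    · rw [if_neg (by omega), min_eq_right (by omega : N ≤ a), min_eq_right (by omega : N + 1 ≤ a)]
      push_cast
      ring

lemma tele_sum (a : ℕ) (N : ℕ) :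
    ∑ l ∈ Finset.range N, (if a ≤ l then (1 / ((l : ℝ) + 1) - 1 / ((l : ℝ) + 2)) else 0)
      ≤ 1 / ((a : ℝ) + 1) := by
  rw [tele_eq]
  rcases min_cases a N with ⟨h1, _⟩ | ⟨h1, _⟩ <;> rw [h1]
  · have : (0:ℝ) ≤ 1 / ((N : ℝ) + 1) := by positivity
    linarith
  · have h2 : (0:ℝ) < 1 / ((a : ℝ) + 1) := by positivity
    linarith

lemma lambda_bound {w : ℝ} (hw0 : 0 ≤ w) (hw1 : w < 1) (N : ℕ) :
    ∑ l ∈ Finset.range N, (Sw w l / Dd l) ^ 2 ≤ 1 / (1 - w) := by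
  set c : ℝ := 1 / (1 - w) with hc
  have hwpos : 0 < 1 - w := by linarith
  have hc1 : 1 ≤ c := by
    rw [hc, le_div_iff₀ hwpos]
    linarith
  have hcpos : 0 < c := by linarith
  set n : ℕ := Nat.floor (2 * c) with hn
  have hn2 : 2 ≤ n := by
    rw [hn]
    apply Nat.le_floor
    push_cast
    linarith
  have hnle : (n : ℝ) ≤ 2 * c := Nat.floor_le (by linarith)
  have hnlt : 2 * c < (n : ℝ) + 1 := Nat.lt_floor_add_one _
  have hn0 : (0 : ℝ) < (n : ℝ) := by
    have : (2:ℝ) ≤ (n:ℝ) := by exact_mod_cast hn2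
    linarith
  have hterm : ∀ l : ℕ, (Sw w l / Dd l) ^ 2 ≤
      (if l + 2 ≤ n then (1/4 : ℝ)
        else c ^ 2 * (1 / ((l : ℝ) + 1) - 1 / ((l : ℝ) + 2))) := by
    intro l
    have hD := Dd_pos l
    have hS0 := Sw_nonneg hw0 l
    split_ifs with hln
    · have h1 : Sw w l / Dd l ≤ 1 / 2 := by
        rw [div_le_div_iff₀ hD (by norm_num)]
        have := Sw_le_half hw0 (le_of_lt hw1) l
        linarith
      calc (Sw w l / Dd l) ^ 2 ≤ (1/2) ^ 2 := by
            apply pow_le_pow_left₀ (by positivity) h1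
        _ = 1/4 := by norm_num
    · have hSl : Sw w l ≤ ((l : ℝ) + 1) * c := by
        have h := Sw_le_lin hw0 hw1 l
        rw [hc]
        calc Sw w l ≤ ((l : ℝ) + 1) / (1 - w) := h
          _ = ((l : ℝ) + 1) * (1 / (1 - w)) := by ring
      have h1 : Sw w l / Dd l ≤ ((l : ℝ) + 1) * c / Dd l :=
        (div_le_div_iff_of_pos_right hD).mpr hSl
      have h2 : (((l : ℝ) + 1) * c / Dd l) ^ 2 = c ^ 2 * (1 / ((l : ℝ) + 2) ^ 2) := by
        unfold Dd
        have hl1 : ((l : ℝ) + 1) ≠ 0 := by positivity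
        have hl2 : ((l : ℝ) + 2) ≠ 0 := by positivity
        field_simp
      have h3 : 1 / ((l : ℝ) + 2) ^ 2 ≤ 1 / ((l : ℝ) + 1) - 1 / ((l : ℝ) + 2) := by
        have hl1 : (0:ℝ) < (l : ℝ) + 1 := by positivity
        have hl2 : (0:ℝ) < (l : ℝ) + 2 := by positivity
        rw [div_sub_div _ _ (ne_of_gt hl1) (ne_of_gt hl2), div_le_div_iff₀ (by positivity) (by positivity)]
        ring_nf
        nlinarith [Nat.cast_nonneg (α := ℝ) l]
      calc (Sw w l / Dd l) ^ 2 ≤ (((l : ℝ) + 1) * c / Dd l) ^ 2 := by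
            apply pow_le_pow_left₀ (by positivity) h1
        _ = c ^ 2 * (1 / ((l : ℝ) + 2) ^ 2) := h2
        _ ≤ c ^ 2 * (1 / ((l : ℝ) + 1) - 1 / ((l : ℝ) + 2)) :=
            mul_le_mul_of_nonneg_left h3 (by positivity)
  have hhead : ∑ l ∈ Finset.range N, (if l + 2 ≤ n then (1/4 : ℝ) else 0) ≤ ((n:ℝ) - 1) / 4 := by
    rw [← Finset.sum_filter, Finset.sum_const]
    have hsub : (Finset.range N).filter (fun l => l + 2 ≤ n) ⊆ Finset.range (n - 1) := by
      intro l hl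
      simp only [Finset.mem_filter, Finset.mem_range] at hl ⊢
      omega
    have hcard := Finset.card_le_card hsub
    rw [Finset.card_range] at hcard
    rw [nsmul_eq_mul]
    have hcast : (((Finset.range N).filter (fun l => l + 2 ≤ n)).card : ℝ) ≤ (n:ℝ) - 1 := by
      calc (((Finset.range N).filter (fun l => l + 2 ≤ n)).card : ℝ)
          ≤ ((n - 1 : ℕ) : ℝ) := Nat.cast_le.mpr hcard
        _ = (n:ℝ) - 1 := by
            have h1 : 1 ≤ n := by omega
            push_cast [h1]
            ring
    nlinarith
  have htail : ∑ l ∈ Finset.range N,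
      (if l + 2 ≤ n then (0:ℝ) else c ^ 2 * (1 / ((l : ℝ) + 1) - 1 / ((l : ℝ) + 2)))
        ≤ c ^ 2 * (1 / (n:ℝ)) := by
    have hcongr : ∀ l ∈ Finset.range N,
        (if l + 2 ≤ n then (0:ℝ) else c ^ 2 * (1 / ((l : ℝ) + 1) - 1 / ((l : ℝ) + 2)))
          = c ^ 2 * (if n - 1 ≤ l then (1 / ((l : ℝ) + 1) - 1 / ((l : ℝ) + 2)) else 0) := by
      intro l _
      by_cases h : l + 2 ≤ n
      · rw [if_pos h, if_neg (by omega), mul_zero]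
      · rw [if_neg h, if_pos (by omega)]
    rw [Finset.sum_congr rfl hcongr, ← Finset.mul_sum]
    have htel := tele_sum (n - 1) N
    have hcast : ((n - 1 : ℕ) : ℝ) + 1 = (n:ℝ) := by
      have h1 : 1 ≤ n := by omega
      push_cast [h1]
      ring
    calc c ^ 2 * ∑ l ∈ Finset.range N,
          (if n - 1 ≤ l then (1 / ((l : ℝ) + 1) - 1 / ((l : ℝ) + 2)) else 0)
        ≤ c ^ 2 * (1 / (((n - 1 : ℕ) : ℝ) + 1)) := mul_le_mul_of_nonneg_left htel (by positivity)
      _ = c ^ 2 * (1 / (n:ℝ)) := by rw [hcast]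
  have hsplit : ∀ l ∈ Finset.range N,
      (if l + 2 ≤ n then (1/4 : ℝ)
        else c ^ 2 * (1 / ((l : ℝ) + 1) - 1 / ((l : ℝ) + 2)))
      = (if l + 2 ≤ n then (1/4 : ℝ) else 0)
        + (if l + 2 ≤ n then (0:ℝ) else c ^ 2 * (1 / ((l : ℝ) + 1) - 1 / ((l : ℝ) + 2))) := by
    intro l _
    split_ifs <;> ring
  have halg : ((n:ℝ) - 1) / 4 + c ^ 2 * (1 / (n:ℝ)) ≤ c := by
    have h1 : 0 ≤ 2 * c - (n:ℝ) := by linarith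
    have h2 : 2 * c - (n:ℝ) < 1 := by linarith
    have h3 : (2 * c - (n:ℝ)) ^ 2 ≤ 2 * c - (n:ℝ) := by nlinarith
    have hn2' : (2:ℝ) ≤ (n:ℝ) := by exact_mod_cast hn2
    have key : (n:ℝ) * ((n:ℝ) - 1) + 4 * c ^ 2 ≤ 4 * c * (n:ℝ) := by nlinarith
    rw [mul_one_div, div_add_div _ _ (by norm_num : (4:ℝ) ≠ 0) (ne_of_gt hn0),
      div_le_iff₀ (by positivity)]
    nlinarith
  calc ∑ l ∈ Finset.range N, (Sw w l / Dd l) ^ 2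
      ≤ ∑ l ∈ Finset.range N,
        (if l + 2 ≤ n then (1/4 : ℝ)
          else c ^ 2 * (1 / ((l : ℝ) + 1) - 1 / ((l : ℝ) + 2))) :=
        Finset.sum_le_sum (fun l _ => hterm l)
    _ = (∑ l ∈ Finset.range N, (if l + 2 ≤ n then (1/4 : ℝ) else 0))
        + ∑ l ∈ Finset.range N,
          (if l + 2 ≤ n then (0:ℝ) else c ^ 2 * (1 / ((l : ℝ) + 1) - 1 / ((l : ℝ) + 2))) := by
        rw [← Finset.sum_add_distrib]
        exact Finset.sum_congr rfl hsplit
    _ ≤ ((n:ℝ) - 1) / 4 + c ^ 2 * (1 / (n:ℝ)) := add_le_add hhead htail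
    _ ≤ c := halg

lemma geo_shift (x : ℝ) (l : ℕ) : ∀ N : ℕ,
    ∑ k ∈ Finset.range N, (if l ≤ k then x ^ (k - l) else 0)
      = ∑ d ∈ Finset.range (N - l), x ^ d := by
  intro N
  induction N with
  | zero => simp
  | succ N ih =>
    rw [Finset.sum_range_succ, ih]
    rcases le_or_gt l N with h | h
    · rw [if_pos h, show N + 1 - l = (N - l) + 1 from by omega, Finset.sum_range_succ]
    · rw [if_neg (by omega), add_zero, show N + 1 - l = N - l by omega]

lemma geo_bound {x : ℝ} (hx : 0 ≤ x) (hx1 : x < 1) (l N : ℕ) :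
    ∑ k ∈ Finset.range N, (if l ≤ k then x ^ (k - l) else 0) ≤ 1 / (1 - x) := by
  rw [geo_shift]
  exact geom_partial hx hx1 _

lemma key_le {u v : ℝ} (hu0 : 0 ≤ u) (hv0 : 0 ≤ v) {K L : ℕ} (h : L ≤ K) :
    (cc K * cc L * (u ^ (K - L) * v ^ (L - K)) * Sw (u * v) (min K L)) ^ 2
      ≤ (u ^ 2) ^ (K - L) * (Sw (u * v) L / Dd L) ^ 2 := by
  rw [min_eq_right h, show L - K = 0 from by omega, pow_zero, mul_one]
  have hDl := Dd_pos L
  have hDk := Dd_pos K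
  have e1 : (cc K * cc L * u ^ (K - L) * Sw (u * v) L) ^ 2
      = (cc K ^ 2) * (cc L ^ 2) * (u ^ (K - L)) ^ 2 * (Sw (u * v) L) ^ 2 := by ring
  have e3 : (u ^ (K - L)) ^ 2 = (u ^ 2) ^ (K - L) := by
    rw [← pow_mul, mul_comm, pow_mul]
  rw [e1, cc_sq, cc_sq, e3]
  have e2 : (u ^ 2) ^ (K - L) * (Sw (u * v) L / Dd L) ^ 2
      = (1 / Dd L) * (1 / Dd L) * (u ^ 2) ^ (K - L) * (Sw (u * v) L) ^ 2 := by
    ring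
  rw [e2]
  have hdd : 1 / Dd K ≤ 1 / Dd L := one_div_le_one_div_of_le hDl (Dd_mono h)
  have h1 : (0:ℝ) ≤ 1 / Dd L := by positivity
  have h2 : (0:ℝ) ≤ (u ^ 2) ^ (K - L) := by positivity
  have h3 : (0:ℝ) ≤ (Sw (u * v) L) ^ 2 := sq_nonneg _
  gcongr

lemma outer_sum_bound {u v : ℝ} (hu0 : 0 ≤ u) (hu1 : u < 1) (hv0 : 0 ≤ v) (hv1 : v < 1)
    (N : ℕ) :
    ∑ k ∈ Finset.range N, ∑ l ∈ Finset.range N,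
      (cc k * cc l * (u ^ (k - l) * v ^ (l - k)) * Sw (u * v) (min k l)) ^ 2
      ≤ (1 / (1 - u * v)) * (1 / (1 - u ^ 2)) + (1 / (1 - u * v)) * (1 / (1 - v ^ 2)) := by
  have huv0 : 0 ≤ u * v := mul_nonneg hu0 hv0
  have huv1 : u * v < 1 := by nlinarith
  have hr0 : 0 ≤ u ^ 2 := sq_nonneg u
  have hr1 : u ^ 2 < 1 := by nlinarith
  have hs0 : 0 ≤ v ^ 2 := sq_nonneg v
  have hs1 : v ^ 2 < 1 := by nlinarith
  have tnonneg : ∀ l : ℕ, 0 ≤ (Sw (u * v) l / Dd l) ^ 2 := fun l => sq_nonneg _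
  have hterm : ∀ k l : ℕ,
      (cc k * cc l * (u ^ (k - l) * v ^ (l - k)) * Sw (u * v) (min k l)) ^ 2
        ≤ (if l ≤ k then (u ^ 2) ^ (k - l) * (Sw (u * v) l / Dd l) ^ 2 else 0)
          + (if l ≤ k then 0 else (v ^ 2) ^ (l - k) * (Sw (u * v) k / Dd k) ^ 2) := by
    intro k l
    split_ifs with h
    · rw [add_zero]
      exact key_le hu0 hv0 h
    · rw [zero_add]
      have h' : k ≤ l := by omega
      have := key_le hv0 hu0 (u := v) (v := u) h'
      calc (cc k * cc l * (u ^ (k - l) * v ^ (l - k)) * Sw (u * v) (min k l)) ^ 2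
          = (cc l * cc k * (v ^ (l - k) * u ^ (k - l)) * Sw (v * u) (min l k)) ^ 2 := by
            rw [mul_comm v u, min_comm l k]
            ring
        _ ≤ (v ^ 2) ^ (l - k) * (Sw (v * u) k / Dd k) ^ 2 := this
        _ = (v ^ 2) ^ (l - k) * (Sw (u * v) k / Dd k) ^ 2 := by rw [mul_comm v u]
  calc ∑ k ∈ Finset.range N, ∑ l ∈ Finset.range N,
        (cc k * cc l * (u ^ (k - l) * v ^ (l - k)) * Sw (u * v) (min k l)) ^ 2
      ≤ ∑ k ∈ Finset.range N, ∑ l ∈ Finset.range N,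
          ((if l ≤ k then (u ^ 2) ^ (k - l) * (Sw (u * v) l / Dd l) ^ 2 else 0)
            + (if l ≤ k then 0 else (v ^ 2) ^ (l - k) * (Sw (u * v) k / Dd k) ^ 2)) := by
        apply Finset.sum_le_sum
        intro k _
        apply Finset.sum_le_sum
        intro l _
        exact hterm k l
    _ = (∑ k ∈ Finset.range N, ∑ l ∈ Finset.range N,
          (if l ≤ k then (u ^ 2) ^ (k - l) * (Sw (u * v) l / Dd l) ^ 2 else 0))
        + ∑ k ∈ Finset.range N, ∑ l ∈ Finset.range N,
          (if l ≤ k then 0 else (v ^ 2) ^ (l - k) * (Sw (u * v) k / Dd k) ^ 2) := by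
        rw [← Finset.sum_add_distrib]
        apply Finset.sum_congr rfl
        intro k _
        rw [← Finset.sum_add_distrib]
    _ ≤ (1 / (1 - u * v)) * (1 / (1 - u ^ 2)) + (1 / (1 - u * v)) * (1 / (1 - v ^ 2)) := by
        apply add_le_add
        · -- first part : swap sums
          rw [Finset.sum_comm]
          have inner1 : ∀ l ∈ Finset.range N,
              ∑ k ∈ Finset.range N, (if l ≤ k then (u ^ 2) ^ (k - l) * (Sw (u * v) l / Dd l) ^ 2 else 0)
                ≤ (1 / (1 - u ^ 2)) * (Sw (u * v) l / Dd l) ^ 2 := by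
            intro l _
            have e : ∀ k ∈ Finset.range N,
                (if l ≤ k then (u ^ 2) ^ (k - l) * (Sw (u * v) l / Dd l) ^ 2 else 0)
                  = (if l ≤ k then (u ^ 2) ^ (k - l) else 0) * (Sw (u * v) l / Dd l) ^ 2 := by
              intro k _
              split_ifs <;> ring
            rw [Finset.sum_congr rfl e, ← Finset.sum_mul]
            exact mul_le_mul_of_nonneg_right (geo_bound hr0 hr1 l N) (tnonneg l)
          calc ∑ l ∈ Finset.range N, ∑ k ∈ Finset.range N,
                (if l ≤ k then (u ^ 2) ^ (k - l) * (Sw (u * v) l / Dd l) ^ 2 else 0)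
              ≤ ∑ l ∈ Finset.range N, (1 / (1 - u ^ 2)) * (Sw (u * v) l / Dd l) ^ 2 :=
                Finset.sum_le_sum inner1
            _ = (1 / (1 - u ^ 2)) * ∑ l ∈ Finset.range N, (Sw (u * v) l / Dd l) ^ 2 := by
                rw [Finset.mul_sum]
            _ ≤ (1 / (1 - u ^ 2)) * (1 / (1 - u * v)) := by
                apply mul_le_mul_of_nonneg_left (lambda_bound huv0 huv1 N)
                  (le_of_lt (one_div_pos.mpr (by linarith)))
            _ = (1 / (1 - u * v)) * (1 / (1 - u ^ 2)) := by ring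
        · -- second part
          have inner2 : ∀ k ∈ Finset.range N,
              ∑ l ∈ Finset.range N, (if l ≤ k then 0 else (v ^ 2) ^ (l - k) * (Sw (u * v) k / Dd k) ^ 2)
                ≤ (1 / (1 - v ^ 2)) * (Sw (u * v) k / Dd k) ^ 2 := by
            intro k _
            have e : ∀ l ∈ Finset.range N,
                (if l ≤ k then (0:ℝ) else (v ^ 2) ^ (l - k) * (Sw (u * v) k / Dd k) ^ 2)
                  ≤ (if k ≤ l then (v ^ 2) ^ (l - k) else 0) * (Sw (u * v) k / Dd k) ^ 2 := by
              intro l _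
              by_cases h : l ≤ k
              · rw [if_pos h]
                split_ifs with h2
                · positivity
                · rw [zero_mul]
              · rw [if_neg h, if_pos (by omega)]
            calc ∑ l ∈ Finset.range N,
                  (if l ≤ k then (0:ℝ) else (v ^ 2) ^ (l - k) * (Sw (u * v) k / Dd k) ^ 2)
                ≤ ∑ l ∈ Finset.range N,
                  (if k ≤ l then (v ^ 2) ^ (l - k) else 0) * (Sw (u * v) k / Dd k) ^ 2 :=
                  Finset.sum_le_sum e
              _ = (∑ l ∈ Finset.range N, (if k ≤ l then (v ^ 2) ^ (l - k) else 0))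
                    * (Sw (u * v) k / Dd k) ^ 2 := by rw [← Finset.sum_mul]
              _ ≤ (1 / (1 - v ^ 2)) * (Sw (u * v) k / Dd k) ^ 2 :=
                  mul_le_mul_of_nonneg_right (geo_bound hs0 hs1 k N) (tnonneg k)
          calc ∑ k ∈ Finset.range N, ∑ l ∈ Finset.range N,
                (if l ≤ k then (0:ℝ) else (v ^ 2) ^ (l - k) * (Sw (u * v) k / Dd k) ^ 2)
              ≤ ∑ k ∈ Finset.range N, (1 / (1 - v ^ 2)) * (Sw (u * v) k / Dd k) ^ 2 :=
                Finset.sum_le_sum inner2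
            _ = (1 / (1 - v ^ 2)) * ∑ k ∈ Finset.range N, (Sw (u * v) k / Dd k) ^ 2 := by
                rw [Finset.mul_sum]
            _ ≤ (1 / (1 - v ^ 2)) * (1 / (1 - u * v)) := by
                apply mul_le_mul_of_nonneg_left (lambda_bound huv0 huv1 N)
                  (le_of_lt (one_div_pos.mpr (by linarith)))
            _ = (1 / (1 - u * v)) * (1 / (1 - v ^ 2)) := by ring

/-- The numerical invariant function `Σ₁(a,b)` of the submodule `M = [z-w]`:
`Σ₁(a,b) = (1-|a|²)(1-|b|²) ∑_{k,l} |⟨wφ_k/(1-b̄w), zψ_l/(1-āz)⟩|²`. -/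
noncomputable def Sigma1 (a b : ℂ) : ℝ :=
  (1 - ‖a‖ ^ 2) * (1 - ‖b‖ ^ 2) *
    ∑' q : ℕ × ℕ, ‖∑' p : ℕ × ℕ, wSide b q.1 p * conj (zSide a q.2 p)‖ ^ 2

theorem stmt_17 (a b : ℂ) (ha : ‖a‖ < 1) (hb : ‖b‖ < 1) :
    Sigma1 a b ≤ 2 := by
  set u : ℝ := ‖a‖ with hu
  set v : ℝ := ‖b‖ with hv
  have hu0 : 0 ≤ u := norm_nonneg a
  have hv0 : 0 ≤ v := norm_nonneg b
  have huv0 : 0 ≤ u * v := mul_nonneg hu0 hv0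
  have huv1 : u * v < 1 := by nlinarith
  have hr1 : u ^ 2 < 1 := by nlinarith
  have hs1 : v ^ 2 < 1 := by nlinarith
  set Q : ℝ := (1 / (1 - u * v)) * (1 / (1 - u ^ 2)) + (1 / (1 - u * v)) * (1 / (1 - v ^ 2))
    with hQdef
  have hQ0 : 0 ≤ Q := by
    rw [hQdef]
    have h1 : (0:ℝ) < 1 - u * v := by linarith
    have h2 : (0:ℝ) < 1 - u ^ 2 := by linarith
    have h3 : (0:ℝ) < 1 - v ^ 2 := by linarith
    positivity
  have hT : ∑' q : ℕ × ℕ, ‖∑' p : ℕ × ℕ, wSide b q.1 p * conj (zSide a q.2 p)‖ ^ 2 ≤ Q := by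
    apply tsum_le_of_sum_le' hQ0
    intro s
    set N : ℕ := (s.sup fun q : ℕ × ℕ => max q.1 q.2) + 1 with hN
    have hsub : s ⊆ Finset.range N ×ˢ Finset.range N := by
      intro q hq
      rw [Finset.mem_product, Finset.mem_range, Finset.mem_range]
      have h1 : max q.1 q.2 ≤ s.sup (fun q : ℕ × ℕ => max q.1 q.2) :=
        Finset.le_sup (f := fun q : ℕ × ℕ => max q.1 q.2) hq
      omega
    have hXnn : ∀ q : ℕ × ℕ,
        (0:ℝ) ≤ (cc q.1 * cc q.2 * (u ^ (q.1 - q.2) * v ^ (q.2 - q.1)) * Sw (u * v) (min q.1 q.2)) ^ 2 :=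
      fun q => sq_nonneg _
    calc ∑ q ∈ s, ‖∑' p : ℕ × ℕ, wSide b q.1 p * conj (zSide a q.2 p)‖ ^ 2
        ≤ ∑ q ∈ s,
            (cc q.1 * cc q.2 * (u ^ (q.1 - q.2) * v ^ (q.2 - q.1)) * Sw (u * v) (min q.1 q.2)) ^ 2 := by
          apply Finset.sum_le_sum
          intro q _
          apply pow_le_pow_left₀ (norm_nonneg _)
          exact inner_bound a b q.1 q.2
      _ ≤ ∑ q ∈ Finset.range N ×ˢ Finset.range N,
            (cc q.1 * cc q.2 * (u ^ (q.1 - q.2) * v ^ (q.2 - q.1)) * Sw (u * v) (min q.1 q.2)) ^ 2 :=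
          Finset.sum_le_sum_of_subset_of_nonneg hsub (fun q _ _ => hXnn q)
      _ = ∑ k ∈ Finset.range N, ∑ l ∈ Finset.range N,
            (cc k * cc l * (u ^ (k - l) * v ^ (l - k)) * Sw (u * v) (min k l)) ^ 2 :=
          Finset.sum_product _ _ _
      _ ≤ Q := outer_sum_bound hu0 ha hv0 hb N
  have hfac : (0:ℝ) ≤ (1 - u ^ 2) * (1 - v ^ 2) := by nlinarith
  have hmain : Sigma1 a b ≤ (1 - u ^ 2) * (1 - v ^ 2) * Q := by
    unfold Sigma1
    rw [mul_assoc, mul_assoc]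
    exact mul_le_mul_of_nonneg_left
      (mul_le_mul_of_nonneg_left hT (by nlinarith)) (by nlinarith)
  have hfinal : (1 - u ^ 2) * (1 - v ^ 2) * Q ≤ 2 := by
    have h1 : (0:ℝ) < 1 - u * v := by linarith
    have h2 : (0:ℝ) < 1 - u ^ 2 := by linarith
    have h3 : (0:ℝ) < 1 - v ^ 2 := by linarith
    have heq : (1 - u ^ 2) * (1 - v ^ 2) * Q
        = ((1 - v ^ 2) + (1 - u ^ 2)) / (1 - u * v) := by
      rw [hQdef]
      field_simp
    rw [heq, div_le_iff₀ h1]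
    nlinarith [sq_nonneg (u - v)]
  linarith
end

section
/- Let $\theta$ be an inner function on the unit disk and let $w \in \mathbb{D}$ with $w \ne \theta(0)$. Then Littlewood's inequality holds: the Nevanlinna counting function satisfies $N_\theta(w) \le \log \left| \frac{1 - \overline{\theta(0)} w}{\theta(0) - w} \right|$, where $N_\theta(w) = \sum_j \log \frac{1}{|z_j|}$, the sum taken over the solutions $z_j \in \mathbb{D}$ of $\theta(z) = w$ counted with multiplicity (and $N_\theta(w) = 0$ if $w \notin \theta(\mathbb{D})$). -/
open ComplexConjugate Metric

noncomputable def AnalyticAt.order {f : ℂ → ℂ} {z₀ : ℂ} (_ : AnalyticAt ℂ f z₀) : ℕ∞ :=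
  analyticOrderAt f z₀

theorem AnalyticAt.order_eq_top_iff {f : ℂ → ℂ} {z₀ : ℂ} (hf : AnalyticAt ℂ f z₀) :
    hf.order = ⊤ ↔ ∀ᶠ z in nhds z₀, f z = 0 := analyticOrderAt_eq_top

theorem AnalyticAt.order_eq_nat_iff {f : ℂ → ℂ} {z₀ : ℂ} (hf : AnalyticAt ℂ f z₀) (n : ℕ) :
    hf.order = n ↔ ∃ (g : ℂ → ℂ), AnalyticAt ℂ g z₀ ∧ g z₀ ≠ 0 ∧
      ∀ᶠ z in nhds z₀, f z = (z - z₀) ^ n • g z := hf.analyticOrderAt_eq_natCast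

private lemma order_congr' {f g : ℂ → ℂ} {z₀ : ℂ} (hf : AnalyticAt ℂ f z₀)
    (hg : AnalyticAt ℂ g z₀) (h : f =ᶠ[nhds z₀] g) : hf.order = hg.order := by
  rcases eq_or_ne hg.order ⊤ with ht | ht
  · rw [ht, AnalyticAt.order_eq_top_iff]
    filter_upwards [h, hg.order_eq_top_iff.mp ht] with z h1 h2
    rw [h1, h2]
  · obtain ⟨n, hn⟩ := WithTop.ne_top_iff_exists.mp ht
    have hn2 : hg.order = (n : ℕ∞) := by exact_mod_cast hn.symm
    obtain ⟨u, hu, hu0, huf⟩ := (hg.order_eq_nat_iff n).mp hn2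
    rw [hn2, hf.order_eq_nat_iff]
    exact ⟨u, hu, hu0, by filter_upwards [h, huf] with z h1 h2; rw [h1, h2]⟩

private lemma order_eq_zero_of_ne' {f : ℂ → ℂ} {z₀ : ℂ} (hf : AnalyticAt ℂ f z₀)
    (h : f z₀ ≠ 0) : hf.order = 0 := by
  rw [show (0 : ℕ∞) = ((0 : ℕ) : ℕ∞) from rfl, hf.order_eq_nat_iff]
  exact ⟨f, hf, h, by filter_upwards with z; simp⟩

private lemma eq_zero_of_order_ne_zero' {f : ℂ → ℂ} {z₀ : ℂ} (hf : AnalyticAt ℂ f z₀)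
    (h : hf.order ≠ 0) : f z₀ = 0 := by
  by_contra hne
  exact h (order_eq_zero_of_ne' hf hne)

private lemma order_mul_of_ne_zero' {f u : ℂ → ℂ} {z₀ : ℂ} (hf : AnalyticAt ℂ f z₀)
    (hu : AnalyticAt ℂ u z₀) (hu0 : u z₀ ≠ 0)
    (hfu : AnalyticAt ℂ (fun z => u z * f z) z₀) : hfu.order = hf.order := by
  rcases eq_or_ne hf.order ⊤ with ht | ht
  · rw [ht, AnalyticAt.order_eq_top_iff]
    filter_upwards [hf.order_eq_top_iff.mp ht] with z hz
    simp [hz]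
  · obtain ⟨n, hn⟩ := WithTop.ne_top_iff_exists.mp ht
    have hn2 : hf.order = (n : ℕ∞) := by exact_mod_cast hn.symm
    obtain ⟨g, hg, hg0, hfg⟩ := (hf.order_eq_nat_iff n).mp hn2
    rw [hn2, hfu.order_eq_nat_iff]
    refine ⟨fun z => u z * g z, hu.mul hg, mul_ne_zero hu0 hg0, ?_⟩
    filter_upwards [hfg] with z hz
    simp only [smul_eq_mul] at hz ⊢
    rw [hz]; ring

private lemma order_linear_mul' {f : ℂ → ℂ} {z₀ : ℂ} (hf : AnalyticAt ℂ f z₀)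
    (hfz : AnalyticAt ℂ (fun z => (z - z₀) * f z) z₀) : hfz.order = 1 + hf.order := by
  rcases eq_or_ne hf.order ⊤ with ht | ht
  · rw [ht]
    rw [show (1 : ℕ∞) + ⊤ = ⊤ by simp, AnalyticAt.order_eq_top_iff]
    filter_upwards [hf.order_eq_top_iff.mp ht] with z hz
    simp [hz]
  · obtain ⟨n, hn⟩ := WithTop.ne_top_iff_exists.mp ht
    have hn2 : hf.order = (n : ℕ∞) := by exact_mod_cast hn.symm
    rw [hn2, show (1 : ℕ∞) + (n : ℕ∞) = ((1 + n : ℕ) : ℕ∞) by push_cast; ring,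
      hfz.order_eq_nat_iff]
    obtain ⟨g, hg, hg0, hfg⟩ := (hf.order_eq_nat_iff n).mp hn2
    refine ⟨g, hg, hg0, ?_⟩
    filter_upwards [hfg] with z hz
    simp only [smul_eq_mul] at hz ⊢
    rw [hz]; ring

private lemma mobius_normSq (a z : ℂ) :
    Complex.normSq (1 - conj a * z) - Complex.normSq (a - z)
      = (1 - Complex.normSq a) * (1 - Complex.normSq z) := by
  simp only [Complex.normSq_apply, Complex.sub_re, Complex.sub_im, Complex.one_re, Complex.one_im,
    Complex.mul_re, Complex.mul_im, Complex.conj_re, Complex.conj_im]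
  ring

private lemma mobius_den_ne (a z : ℂ) (ha : ‖a‖ < 1) (hz : ‖z‖ ≤ 1) :
    1 - conj a * z ≠ 0 := by
  intro h
  have h1 : (1 : ℂ) = conj a * z := by linear_combination h
  have h2 : (1 : ℝ) = ‖conj a * z‖ := by rw [← h1]; simp
  rw [norm_mul, RCLike.norm_conj] at h2
  nlinarith [norm_nonneg z, norm_nonneg a]

private lemma norm_lt_of_normSq_lt {x y : ℂ} (h : Complex.normSq x < Complex.normSq y) :
    ‖x‖ < ‖y‖ := by
  have hx : ‖x‖ ^ 2 < ‖y‖ ^ 2 := by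
    rw [← Complex.sq_norm, ← Complex.sq_norm] at h
    simpa using h
  nlinarith [norm_nonneg x, norm_nonneg y]

private lemma norm_le_of_normSq_le {x y : ℂ} (h : Complex.normSq x ≤ Complex.normSq y) :
    ‖x‖ ≤ ‖y‖ := by
  have hx : ‖x‖ ^ 2 ≤ ‖y‖ ^ 2 := by
    rw [← Complex.sq_norm, ← Complex.sq_norm] at h
    simpa using h
  nlinarith [norm_nonneg x, norm_nonneg y]

private lemma normSq_lt_one {a : ℂ} (h : ‖a‖ < 1) : Complex.normSq a < 1 := by
  have := Complex.sq_norm a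
  nlinarith [norm_nonneg a]

private lemma mobius_maps (a : ℂ) (ha : ‖a‖ < 1) :
    Set.MapsTo (fun z => (a - z) / (1 - conj a * z)) (ball (0 : ℂ) 1) (ball (0 : ℂ) 1) := by
  intro z hz
  rw [mem_ball_zero_iff] at hz ⊢
  have hd := mobius_den_ne a z ha hz.le
  have h1 : Complex.normSq (a - z) < Complex.normSq (1 - conj a * z) := by
    have := mobius_normSq a z
    nlinarith [normSq_lt_one ha, normSq_lt_one hz]
  have h2 := norm_lt_of_normSq_lt h1
  rw [norm_div, div_lt_one (lt_of_le_of_lt (norm_nonneg _) h2)]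
  exact h2

private lemma mobius_invol (a : ℂ) (ha : ‖a‖ < 1) {z : ℂ} (hz : ‖z‖ < 1) :
    (a - (a - z) / (1 - conj a * z)) / (1 - conj a * ((a - z) / (1 - conj a * z))) = z := by
  have h1 : 1 - conj a * z ≠ 0 := mobius_den_ne a z ha hz.le
  have hc : 1 - conj a * a ≠ 0 := mobius_den_ne a a ha ha.le
  have hN : a - (a - z) / (1 - conj a * z) = z * (1 - conj a * a) / (1 - conj a * z) := by
    rw [eq_div_iff h1, sub_mul, div_mul_cancel₀ _ h1]
    ring
  have hD : 1 - conj a * ((a - z) / (1 - conj a * z)) = (1 - conj a * a) / (1 - conj a * z) := by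
    rw [eq_div_iff h1, sub_mul, mul_assoc, div_mul_cancel₀ _ h1]
    ring
  rw [hN, hD, div_div_div_eq, mul_assoc, mul_comm (1 - conj a * z) (1 - conj a * a)]
  exact mul_div_cancel_right₀ z (mul_ne_zero hc h1)

private lemma blaschke_key (N : ℕ) : ∀ (g : ℂ → ℂ), DifferentiableOn ℂ g (ball (0 : ℂ) 1) →
    Set.MapsTo g (ball (0 : ℂ) 1) (closedBall (0 : ℂ) 1) →
    ∀ (F : Finset ℂ) (mm : ℂ → ℕ), (∀ a ∈ F, a ∈ ball (0 : ℂ) 1) →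
    (∀ a ∈ F, ∀ h : AnalyticAt ℂ g a, (mm a : ℕ∞) ≤ h.order) →
    (∑ a ∈ F, mm a) = N →
    ‖g 0‖ ≤ ∏ a ∈ F, ‖a‖ ^ (mm a) := by
  induction N with
  | zero =>
    intro g hgd hgm F mm hF _ hsum
    have hz : ∀ a ∈ F, mm a = 0 := Finset.sum_eq_zero_iff.mp hsum
    have h1 : ∏ a ∈ F, ‖a‖ ^ (mm a) = 1 := Finset.prod_eq_one (fun a ha => by rw [hz a ha, pow_zero])
    rw [h1]
    have := hgm (mem_ball_self one_pos)
    rwa [mem_closedBall, dist_zero_right] at this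
  | succ N ih =>
    intro g hgd hgm F mm hF hord hsum
    classical
    -- pick a zero with positive multiplicity
    obtain ⟨a, haF, hma⟩ : ∃ a ∈ F, mm a ≠ 0 :=
      Finset.exists_ne_zero_of_sum_ne_zero (by rw [hsum]; exact Nat.succ_ne_zero N)
    have haball : a ∈ ball (0 : ℂ) 1 := hF a haF
    have hanorm : ‖a‖ < 1 := by rwa [mem_ball_zero_iff] at haball
    have hga : AnalyticAt ℂ g a := hgd.analyticAt (isOpen_ball.mem_nhds haball)
    have hga0 : g a = 0 := by
      refine eq_zero_of_order_ne_zero' hga (fun h0 => hma ?_)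
      have := hord a haF hga
      rw [h0] at this
      exact_mod_cast le_antisymm (by exact_mod_cast this) (Nat.zero_le _)
    -- the Möbius involution
    set φ : ℂ → ℂ := fun z => (a - z) / (1 - conj a * z) with hφ
    have hφmaps : Set.MapsTo φ (ball (0 : ℂ) 1) (ball (0 : ℂ) 1) := mobius_maps a hanorm
    have hφinv : ∀ z ∈ ball (0 : ℂ) 1, φ (φ z) = z := by
      intro z hz
      rw [mem_ball_zero_iff] at hz
      exact mobius_invol a hanorm hz
    have hφd : DifferentiableOn ℂ φ (ball (0 : ℂ) 1) := by
      apply DifferentiableOn.div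
      · exact (differentiable_const a).differentiableOn.sub differentiable_id.differentiableOn
      · exact (differentiable_const (1 : ℂ)).differentiableOn.sub
          ((differentiable_const (conj a)).differentiableOn.mul differentiable_id.differentiableOn)
      · intro z hz
        rw [mem_ball_zero_iff] at hz
        exact mobius_den_ne a z hanorm hz.le
    have hφ0 : φ 0 = a := by simp [hφ]
    -- the quotient function
    set G : ℂ → ℂ := fun z => g (φ z) with hG
    have hGd : DifferentiableOn ℂ G (ball (0 : ℂ) 1) := hgd.comp hφd hφmaps
    have hG0 : G 0 = 0 := by rw [hG]; simp only [hφ0]; exact hga0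
    set ψ : ℂ → ℂ := dslope G 0 with hψ
    have hballmem : ball (0 : ℂ) 1 ∈ nhds (0 : ℂ) := isOpen_ball.mem_nhds (mem_ball_self one_pos)
    have hψd : DifferentiableOn ℂ ψ (ball (0 : ℂ) 1) :=
      (Complex.differentiableOn_dslope hballmem).mpr hGd
    have hψle : ∀ z ∈ ball (0 : ℂ) 1, ‖ψ z‖ ≤ 1 := by
      intro z hz
      refine le_of_forall_pos_le_add (fun ε hε => ?_)
      have hmaps : Set.MapsTo G (ball (0 : ℂ) 1) (closedBall (G 0) (1 + ε)) := by
        intro x hx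
        have := hgm (hφmaps hx)
        rw [mem_closedBall, dist_zero_right] at this
        rw [hG0, mem_closedBall, dist_zero_right]
        calc ‖G x‖ ≤ 1 := this
        _ ≤ 1 + ε := by linarith
      have := Complex.norm_dslope_le_div_of_mapsTo_ball hGd hmaps hz
      rwa [div_one] at this
    have hGψ : ∀ z, G z = z * ψ z := by
      intro z
      have h := sub_smul_dslope G 0 z
      rw [sub_zero, smul_eq_mul, hG0, sub_zero] at h
      rw [← h, hψ]
    set g₁ : ℂ → ℂ := fun z => ψ (φ z) with hg₁
    have hg₁d : DifferentiableOn ℂ g₁ (ball (0 : ℂ) 1) := hψd.comp hφd hφmaps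
    have hg₁m : Set.MapsTo g₁ (ball (0 : ℂ) 1) (closedBall (0 : ℂ) 1) := by
      intro z hz
      rw [mem_closedBall, dist_zero_right]
      exact hψle (φ z) (hφmaps hz)
    have hgfact : ∀ z ∈ ball (0 : ℂ) 1, g z = φ z * g₁ z := by
      intro z hz
      have h2 : g z = G (φ z) := by rw [hG]; simp only [hφinv z hz]
      rw [h2, hGψ (φ z), hg₁]
    -- order bookkeeping
    set mm' : ℂ → ℕ := Function.update mm a (mm a - 1) with hmm'
    have hordnew : ∀ b ∈ F, ∀ h : AnalyticAt ℂ g₁ b, (mm' b : ℕ∞) ≤ h.order := by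
      intro b hb hg₁b
      have hbball := hF b hb
      have hbnorm : ‖b‖ < 1 := by rwa [mem_ball_zero_iff] at hbball
      have hgb : AnalyticAt ℂ g b := hgd.analyticAt (isOpen_ball.mem_nhds hbball)
      have hφb : AnalyticAt ℂ φ b := hφd.analyticAt (isOpen_ball.mem_nhds hbball)
      have hmul : AnalyticAt ℂ (fun z => φ z * g₁ z) b := hφb.mul hg₁b
      have heq : hgb.order = hmul.order := by
        refine order_congr' hgb hmul ?_
        exact Filter.eventuallyEq_of_mem (isOpen_ball.mem_nhds hbball) hgfact
      have hbord : (mm b : ℕ∞) ≤ hmul.order := heq ▸ hord b hb hgb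
      by_cases hba : b = a
      · subst hba
        -- φ z * g₁ z = (z - b) * (u z * g₁ z), u z = -(1 - conj b * z)⁻¹
        set u : ℂ → ℂ := fun z => -(1 - conj b * z)⁻¹ with hu
        have hub : AnalyticAt ℂ u b := by
          apply AnalyticAt.neg
          apply AnalyticAt.inv
          · exact analyticAt_const.sub (analyticAt_const.mul analyticAt_id)
          · exact mobius_den_ne b b hbnorm hbnorm.le
        have hub0 : u b ≠ 0 := by
          simp only [hu, ne_eq, neg_eq_zero, inv_eq_zero]
          exact mobius_den_ne b b hbnorm hbnorm.le
        have hfun : (fun z => φ z * g₁ z) = fun z => (z - b) * (u z * g₁ z) := by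
          funext z
          rw [hφ, hu]
          simp only [div_eq_mul_inv]
          ring
        have hmul2 : AnalyticAt ℂ (fun z => (z - b) * (u z * g₁ z)) b := hfun ▸ hmul
        have hug₁ : AnalyticAt ℂ (fun z => u z * g₁ z) b := hub.mul hg₁b
        have e1 : hmul.order = hmul2.order :=
          order_congr' hmul hmul2 (by rw [hfun])
        have e2 : hmul2.order = 1 + hug₁.order := order_linear_mul' hug₁ hmul2
        have e3 : hug₁.order = hg₁b.order := order_mul_of_ne_zero' hg₁b hub hub0 hug₁
        rw [e1, e2, e3] at hbord
        -- (mm b : ℕ∞) ≤ 1 + hg₁b.order, mm b ≥ 1 ⟹ mm b - 1 ≤ order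
        obtain ⟨k, hk⟩ := Nat.exists_eq_succ_of_ne_zero hma
        rw [hk] at hbord
        have h2 : ((k : ℕ∞)) + 1 ≤ 1 + hg₁b.order := by exact_mod_cast hbord
        rw [add_comm ((k : ℕ∞)) 1] at h2
        have h3 := (WithTop.add_le_add_iff_left (by simp : (1 : ℕ∞) ≠ ⊤)).mp h2
        have h4 : mm' b = k := by simp [hmm', Function.update_self, hk]
        rw [h4]
        exact h3
      · have hφb0 : φ b ≠ 0 := by
          rw [hφ]
          apply div_ne_zero
          · exact sub_ne_zero.mpr (fun h => hba (by rw [h]))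
          · exact mobius_den_ne a b hanorm hbnorm.le
        have e3 : hmul.order = hg₁b.order := order_mul_of_ne_zero' hg₁b hφb hφb0 hmul
        rw [e3] at hbord
        simpa [hmm', Function.update_of_ne hba] using hbord
    -- apply induction hypothesis
    have hsum' : (∑ x ∈ F, mm' x) = N := by
      have h1 : (∑ x ∈ F, mm' x) = (mm a - 1) + ∑ x ∈ F.erase a, mm x := by
        rw [hmm', Finset.sum_update_of_mem haF, Finset.sdiff_singleton_eq_erase]
      have h2 : mm a + ∑ x ∈ F.erase a, mm x = N + 1 := by
        rw [Finset.add_sum_erase _ _ haF]; exact hsum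
      omega
    have hIH := ih g₁ hg₁d hg₁m F mm' hF hordnew hsum'
    -- conclude
    have hg0 : g 0 = φ 0 * g₁ 0 := hgfact 0 (mem_ball_self one_pos)
    have hprod : ∏ x ∈ F, ‖x‖ ^ (mm x) = ‖a‖ * ∏ x ∈ F, ‖x‖ ^ (mm' x) := by
      rw [← Finset.mul_prod_erase F (fun x => ‖x‖ ^ mm x) haF,
          ← Finset.mul_prod_erase F (fun x => ‖x‖ ^ mm' x) haF]
      have he : ∏ x ∈ F.erase a, ‖x‖ ^ (mm' x) = ∏ x ∈ F.erase a, ‖x‖ ^ (mm x) := by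
        apply Finset.prod_congr rfl
        intro x hx
        rw [hmm', Function.update_of_ne (Finset.ne_of_mem_erase hx)]
      rw [he, ← mul_assoc]
      congr 1
      have h4 : mm' a = mm a - 1 := by simp [hmm']
      rw [h4, ← pow_succ', show mm a - 1 + 1 = mm a from by omega]
    calc ‖g 0‖ = ‖a‖ * ‖g₁ 0‖ := by rw [hg0, norm_mul, hφ0]
    _ ≤ ‖a‖ * ∏ x ∈ F, ‖x‖ ^ (mm' x) := by
        exact mul_le_mul_of_nonneg_left hIH (norm_nonneg a)
    _ = ∏ x ∈ F, ‖x‖ ^ (mm x) := hprod.symm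

theorem stmt_19 (θ : ℂ → ℂ)
    (hθa : ∀ z ∈ ball (0 : ℂ) 1, AnalyticAt ℂ θ z)
    (hθm : Set.MapsTo θ (ball (0 : ℂ) 1) (closedBall (0 : ℂ) 1))
    -- `θ` is inner: radial boundary values of modulus one almost everywhere
    (hθinner : ∀ᵐ t : ℝ,
      Filter.Tendsto (fun r : ℝ => ‖θ ((r : ℂ) * Complex.exp (t * Complex.I))‖)
        (nhdsWithin 1 (Set.Iio 1)) (nhds 1))
    (w : ℂ) (hw : ‖w‖ < 1) (hw0 : w ≠ θ 0)
    -- `m z` is the multiplicity of `z` as a solution of `θ(z) = w`,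
    -- i.e. the order of vanishing of `θ - w` at `z`:
    (m : ↥(ball (0 : ℂ) 1) → ℕ)
    (hm : ∀ z : ↥(ball (0 : ℂ) 1),
      (m z : ℕ∞) = analyticOrderAt (θ - fun _ => w) (z : ℂ)) :
    -- Littlewood's inequality for the Nevanlinna counting function
    -- `N_θ(w) = ∑_j log (1/|z_j|)`:
    ∑' z : ↥(ball (0 : ℂ) 1), (m z : ℝ) * Real.log (1 / ‖(z : ℂ)‖) ≤
      Real.log ‖(1 - conj (θ 0) * w) / (θ 0 - w)‖ := by
  classical
  have h01 : (0 : ℂ) ∈ ball (0 : ℂ) 1 := mem_ball_self one_pos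
  have hθle : ∀ z ∈ ball (0 : ℂ) 1, ‖θ z‖ ≤ 1 := by
    intro z hz
    have := hθm hz
    rwa [mem_closedBall, dist_zero_right] at this
  have hden : ∀ z ∈ ball (0 : ℂ) 1, 1 - conj w * θ z ≠ 0 := by
    intro z hz
    exact mobius_den_ne w (θ z) hw (hθle z hz)
  set g : ℂ → ℂ := fun z => (θ z - w) / (1 - conj w * θ z) with hgdef
  have hθd : DifferentiableOn ℂ θ (ball (0 : ℂ) 1) :=
    fun z hz => ((hθa z hz).differentiableAt).differentiableWithinAt
  have hgd : DifferentiableOn ℂ g (ball (0 : ℂ) 1) :=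
    (hθd.sub (differentiableOn_const w)).div
      ((differentiableOn_const 1).sub ((differentiableOn_const (conj w)).mul hθd)) hden
  have hgm : Set.MapsTo g (ball (0 : ℂ) 1) (closedBall (0 : ℂ) 1) := by
    intro z hz
    rw [mem_closedBall, dist_zero_right]
    have hns : Complex.normSq (θ z) ≤ 1 := by
      have h := hθle z hz
      have h2 := Complex.sq_norm (θ z)
      nlinarith [norm_nonneg (θ z)]
    have h1 : Complex.normSq (w - θ z) ≤ Complex.normSq (1 - conj w * θ z) := by
      have := mobius_normSq w (θ z)
      nlinarith [normSq_lt_one hw]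
    have h2 := norm_le_of_normSq_le h1
    rw [norm_sub_rev] at h2
    rw [hgdef]
    simp only
    rw [norm_div]
    exact div_le_one_of_le₀ h2 (norm_nonneg _)
  -- order of g equals order of θ - w
  have hordg : ∀ (z : ℂ) (hz : z ∈ ball (0 : ℂ) 1) (h : AnalyticAt ℂ g z),
      h.order = ((hθa z hz).sub (analyticAt_const (v := w))).order := by
    intro z hz h
    have hθz := hθa z hz
    have hfz : AnalyticAt ℂ (θ - fun _ => w) z := hθz.sub (analyticAt_const (v := w))
    have huz : AnalyticAt ℂ (fun x => (1 - conj w * θ x)⁻¹) z :=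
      (analyticAt_const.sub (analyticAt_const.mul hθz)).inv (hden z hz)
    have hu0 : (1 - conj w * θ z)⁻¹ ≠ 0 := inv_ne_zero (hden z hz)
    have hmul : AnalyticAt ℂ (fun x => (1 - conj w * θ x)⁻¹ * (θ x - w)) z :=
      huz.mul (hθz.sub analyticAt_const)
    have e1 : h.order = hmul.order := by
      refine order_congr' h hmul (Filter.Eventually.of_forall (fun x => ?_))
      show (θ x - w) / (1 - conj w * θ x) = (1 - conj w * θ x)⁻¹ * (θ x - w)
      rw [div_eq_mul_inv, mul_comm]
    rw [e1]
    exact order_mul_of_ne_zero' hfz huz hu0 hmul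
  have hg0ne : g 0 ≠ 0 := div_ne_zero (sub_ne_zero.mpr (Ne.symm hw0)) (hden 0 h01)
  have hg0pos : 0 < ‖g 0‖ := norm_pos_iff.mpr hg0ne
  have hg0le : ‖g 0‖ ≤ 1 := by
    have := hgm h01
    rwa [mem_closedBall, dist_zero_right] at this
  -- RHS equals -log ‖g 0‖
  have hAne : θ 0 - w ≠ 0 := sub_ne_zero.mpr (Ne.symm hw0)
  have hBne : 1 - conj w * θ 0 ≠ 0 := hden 0 h01
  have e1 : ‖1 - conj (θ 0) * w‖ = ‖1 - conj w * θ 0‖ := by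
    rw [← RCLike.norm_conj (1 - conj w * θ 0)]
    congr 1
    rw [map_sub, map_one, map_mul]
    simp only [Complex.conj_conj]
    ring
  have hCne : ‖1 - conj (θ 0) * w‖ ≠ 0 := by
    rw [e1]; exact norm_ne_zero_iff.mpr hBne
  have hgval : ‖g 0‖ = ‖θ 0 - w‖ / ‖1 - conj w * θ 0‖ := by
    rw [hgdef]; simp only; rw [norm_div]
  have hRHS : Real.log ‖(1 - conj (θ 0) * w) / (θ 0 - w)‖ = - Real.log ‖g 0‖ := by
    rw [norm_div, hgval, Real.log_div hCne (norm_ne_zero_iff.mpr hAne),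
      Real.log_div (norm_ne_zero_iff.mpr hAne) (norm_ne_zero_iff.mpr hBne), e1]
    ring
  -- bound for every finite subset
  have hfin : ∀ s : Finset ↥(ball (0 : ℂ) 1),
      ∑ z ∈ s, (m z : ℝ) * Real.log (1 / ‖(z : ℂ)‖) ≤
        Real.log ‖(1 - conj (θ 0) * w) / (θ 0 - w)‖ := by
    intro s
    set F : Finset ℂ := s.image Subtype.val with hF
    set mm : ℂ → ℕ := fun x => if hx : x ∈ ball (0 : ℂ) 1 then m ⟨x, hx⟩ else 0 with hmm
    have hsum_eq : ∑ z ∈ s, (m z : ℝ) * Real.log (1 / ‖(z : ℂ)‖)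
        = ∑ x ∈ F, (mm x : ℝ) * Real.log (1 / ‖x‖) := by
      rw [hF, Finset.sum_image (by intro x _ y _ h; exact Subtype.ext h)]
      apply Finset.sum_congr rfl
      intro z _
      have : mm (z : ℂ) = m z := by simp only [hmm]; rw [dif_pos z.2, Subtype.coe_eta]
      rw [this]
    set F' : Finset ℂ := F.erase 0 with hF'
    have hzero : (mm (0 : ℂ) : ℝ) * Real.log (1 / ‖(0 : ℂ)‖) = 0 := by simp
    have hsum_eq2 : ∑ x ∈ F', (mm x : ℝ) * Real.log (1 / ‖x‖)
        = ∑ x ∈ F, (mm x : ℝ) * Real.log (1 / ‖x‖) := Finset.sum_erase F hzero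
    have hFball : ∀ x ∈ F', x ∈ ball (0 : ℂ) 1 := by
      intro x hx
      obtain ⟨z, _, hzx⟩ := Finset.mem_image.mp (Finset.mem_of_mem_erase hx)
      rw [← hzx]; exact z.2
    have hord' : ∀ x ∈ F', ∀ h : AnalyticAt ℂ g x, (mm x : ℕ∞) ≤ h.order := by
      intro x hx h
      have hxb := hFball x hx
      rw [hordg x hxb h]
      have h2 : mm x = m ⟨x, hxb⟩ := by simp only [hmm]; rw [dif_pos hxb]
      rw [h2]
      exact le_of_eq (hm ⟨x, hxb⟩)
    have hkey := blaschke_key (∑ x ∈ F', mm x) g hgd hgm F' mm hFball hord' rfl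
    have hP : ∀ x ∈ F', (0 : ℝ) < ‖x‖ ^ mm x :=
      fun x hx => pow_pos (norm_pos_iff.mpr (Finset.ne_of_mem_erase hx)) _
    have hlog := Real.log_le_log hg0pos hkey
    rw [Real.log_prod (fun x hx => (hP x hx).ne')] at hlog
    have hlog2 : Real.log ‖g 0‖ ≤ ∑ x ∈ F', (mm x : ℝ) * Real.log ‖x‖ := by
      refine le_trans hlog (le_of_eq (Finset.sum_congr rfl (fun x hx => ?_)))
      rw [Real.log_pow]
    calc ∑ z ∈ s, (m z : ℝ) * Real.log (1 / ‖(z : ℂ)‖)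
        = ∑ x ∈ F, (mm x : ℝ) * Real.log (1 / ‖x‖) := hsum_eq
      _ = ∑ x ∈ F', (mm x : ℝ) * Real.log (1 / ‖x‖) := hsum_eq2.symm
      _ = ∑ x ∈ F', -((mm x : ℝ) * Real.log ‖x‖) := by
            refine Finset.sum_congr rfl (fun x hx => ?_)
            rw [one_div, Real.log_inv]
            ring
      _ = -∑ x ∈ F', (mm x : ℝ) * Real.log ‖x‖ := by rw [Finset.sum_neg_distrib]
      _ ≤ -Real.log ‖g 0‖ := neg_le_neg hlog2
      _ = Real.log ‖(1 - conj (θ 0) * w) / (θ 0 - w)‖ := hRHS.symm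
  -- nonnegativity of the terms
  have hnonneg : ∀ z : ↥(ball (0 : ℂ) 1), 0 ≤ (m z : ℝ) * Real.log (1 / ‖(z : ℂ)‖) := by
    intro z
    rcases eq_or_ne ((z : ℂ)) 0 with h0 | h0
    · rw [h0]; simp
    · apply mul_nonneg (Nat.cast_nonneg _)
      apply Real.log_nonneg
      rw [le_div_iff₀ (norm_pos_iff.mpr h0), one_mul]
      exact (mem_ball_zero_iff.mp z.2).le
  have hsummable : Summable (fun z : ↥(ball (0 : ℂ) 1) => (m z : ℝ) * Real.log (1 / ‖(z : ℂ)‖)) :=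
    summable_of_sum_le hnonneg hfin
  exact Summable.tsum_le_of_sum_le hsummable hfin
end
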